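/- arXiv:2501.18204 — 3 statements merged into one kernel-verified Lean document; each statement's English description precedes it below -/
import Mathlib

section
/- Let d ≥ 2 and let 𝒱(x) be the cell of a centered random tree after N steps. For any α ∈ (0,1/d), with β = (d−1)α/(1−α): ℙ(diam(𝒱(x)) ≥ √d · 2^{−αN}) ≤ d (1 − (1−β)/d)^N β^{−αN}. Moreover, for any α ∈ (1/d,1), with the same β = (d−1)α/(1−α): ℙ(diam(𝒱(x)) ≤ √d · 2^{−αN}) ≤ d (1 − (1−β)/d)^N β^{−αN}. -/
open MeasureTheory ProbabilityTheory Real Set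
open scoped ENNReal Classical

noncomputable section

abbrev Euc (d : ℕ) := EuclideanSpace ℝ (Fin d)

/-- Shattering coefficient `S_𝒜(n)` of a class of subsets of `ℝ^d`. -/
def shatterCoeff {d : ℕ} (𝒜 : Set (Set (Euc d))) (n : ℕ) : ℕ :=
  sSup {m : ℕ | ∃ z : Fin n → Euc d,
    m = Set.ncard {v : Fin n → Prop | ∃ A ∈ 𝒜, v = fun i => z i ∈ A}}

/-- VC dimension: the largest `n` with `S_𝒜(n) = 2^n`. -/
def vcDim {d : ℕ} (𝒜 : Set (Set (Euc d))) : ℕ :=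
  sSup {n : ℕ | 1 ≤ n ∧ shatterCoeff 𝒜 n = 2 ^ n}

/-- The local averaging estimator `ĝ_𝒱(x)` (with convention 0/0 = 0). -/
def locAvg {Ω : Type*} {d n : ℕ} (Xs : Fin n → Ω → Euc d) (Ys : Fin n → Ω → ℝ)
    (V : Set (Euc d)) (ω : Ω) : ℝ :=
  (∑ i, if Xs i ω ∈ V then Ys i ω else 0) / (∑ i, if Xs i ω ∈ V then (1:ℝ) else 0)

/-- `n ℙ_n(V)`: number of covariates falling in `V`. -/
def empCount {Ω : Type*} {d n : ℕ} (Xs : Fin n → Ω → Euc d) (V : Set (Euc d)) (ω : Ω) : ℝ :=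
  ∑ i, if Xs i ω ∈ V then (1:ℝ) else 0

/-- Local Lipschitz constant `L(V)` of `g` on `V`. -/
def locLip {d : ℕ} (g : Euc d → ℝ) (V : Set (Euc d)) : ℝ :=
  sInf {L : ℝ | 0 ≤ L ∧ ∀ x ∈ V, ∀ y ∈ V, |g x - g y| ≤ L * ‖x - y‖}

/-- Assumption (E): conditionally centered and sub-Gaussian noise. -/
def CondSubG {Ω : Type*} [MeasurableSpace Ω] {d : ℕ} (μ : Measure Ω)
    (X : Ω → Euc d) (Y : Ω → ℝ) (g : Euc d → ℝ) (σ : ℝ) : Prop :=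
  (μ[fun ω => Y ω - g (X ω) | MeasurableSpace.comap X inferInstance] =ᵐ[μ] 0)
  ∧ ∀ l : ℝ,
      (μ[fun ω => Real.exp (l * (Y ω - g (X ω))) | MeasurableSpace.comap X inferInstance])
        ≤ᵐ[μ] fun _ => Real.exp (l ^ 2 / (2 * σ ^ 2))

/-- The regression sample is i.i.d. -/
def IIDSample {Ω : Type*} [MeasurableSpace Ω] {d n : ℕ} (μ : Measure Ω)
    (Xs : Fin n → Ω → Euc d) (Ys : Fin n → Ω → ℝ) : Prop :=
  (∀ i, Measurable (Xs i)) ∧ (∀ i, Measurable (Ys i)) ∧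
  iIndepFun (fun i ω => (Xs i ω, Ys i ω)) μ ∧
  ∀ i j, IdentDistrib (fun ω => (Xs i ω, Ys i ω)) (fun ω => (Xs j ω, Ys j ω)) μ μ

/-- Closed hyper-rectangle with corners `a`, `b`. -/
def box {d : ℕ} (a b : Fin d → ℝ) : Set (Euc d) := {x | ∀ k, x k ∈ Set.Icc (a k) (b k)}

/-- Endpoints of the random tree cell containing `x` after `N` splits. -/
def treeEndpoints (d : ℕ) (x : Euc d) (D : ℕ → Fin d) (S : ℕ → ℝ) :
    ℕ → (Fin d → ℝ) × (Fin d → ℝ)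
  | 0 => (fun _ => 0, fun _ => 1)
  | N + 1 =>
    let p := treeEndpoints d x D S N
    let k := D N
    let c := p.1 k + (p.2 k - p.1 k) * S N
    if x k < c then (p.1, Function.update p.2 k c)
    else (Function.update p.1 k c, p.2)

/-- The cell of the random tree containing `x` after `N` splits. -/
def treeCell (d : ℕ) (x : Euc d) (D : ℕ → Fin d) (S : ℕ → ℝ) (N : ℕ) : Set (Euc d) :=
  box (treeEndpoints d x D S N).1 (treeEndpoints d x D S N).2

/-- Side length in direction `k` of the cell after `N` splits. -/
def cellSide (d : ℕ) (x : Euc d) (D : ℕ → Fin d) (S : ℕ → ℝ) (N : ℕ) (k : Fin d) : ℝ :=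
  (treeEndpoints d x D S N).2 k - (treeEndpoints d x D S N).1 k

/-- `S̄_i`: the length reduction at step `i`. -/
def treeSbar (d : ℕ) (x : Euc d) (D : ℕ → Fin d) (S : ℕ → ℝ) (i : ℕ) : ℝ :=
  let p := treeEndpoints d x D S i
  let k := D i
  let c := p.1 k + (p.2 k - p.1 k) * S i
  if x k < c then S i else 1 - S i

/-- Splits of a uniform random tree: i.i.d. pairs, `D_i` uniform on directions,
`S_i` uniform on `(0,1)`, all independent. -/
def UniformSplits {Ω : Type*} [MeasurableSpace Ω] (μ : Measure Ω) (d : ℕ)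
    (D : ℕ → Ω → Fin d) (S : ℕ → Ω → ℝ) : Prop :=
  (∀ i, Measurable (D i)) ∧ (∀ i, Measurable (S i)) ∧
  iIndepFun (fun i ω => (D i ω, S i ω)) μ ∧
  (∀ i k, μ {ω | D i ω = k} = (d : ℝ≥0∞)⁻¹) ∧
  (∀ i, Measure.map (S i) μ = volume.restrict (Set.Ioo (0:ℝ) 1)) ∧
  (∀ i, IndepFun (D i) (S i) μ)

/-- Splits of a centered random tree: `D_i` i.i.d. uniform on directions, `S_i = 1/2` a.s. -/
def CenteredSplits {Ω : Type*} [MeasurableSpace Ω] (μ : Measure Ω) (d : ℕ)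
    (D : ℕ → Ω → Fin d) (S : ℕ → Ω → ℝ) : Prop :=
  (∀ i, Measurable (D i)) ∧
  iIndepFun D μ ∧
  (∀ i k, μ {ω | D i ω = k} = (d : ℝ≥0∞)⁻¹) ∧
  (∀ i, ∀ᵐ ω ∂μ, S i ω = 1/2)

/-- The `k`-NN radius `τ̂_k(x)`. -/
def knnRadius {Ω : Type*} {d n : ℕ} (Xs : Fin n → Ω → Euc d) (k : ℕ) (ω : Ω) (x : Euc d) : ℝ :=
  sInf {τ : ℝ | 0 < τ ∧ (k : ℝ) ≤ ∑ i, if Xs i ω ∈ Metric.closedBall x τ then (1:ℝ) else 0}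


lemma cellSide_eq (d : ℕ) (x : Euc d) (D : ℕ → Fin d) (S : ℕ → ℝ)
    (hS : ∀ i, S i = 1/2) :
    ∀ N k, cellSide d x D S N k =
      (1/2 : ℝ) ^ (((Finset.range N).filter (fun i => D i = k)).card) := by
  intro N
  induction N with
  | zero => intro k; simp [cellSide, treeEndpoints]
  | succ N ih =>
    intro k
    have hstep : cellSide d x D S (N+1) k =
        (if D N = k then (1/2:ℝ) else 1) * cellSide d x D S N k := by
      unfold cellSide
      simp only [treeEndpoints, hS N]
      set p := treeEndpoints d x D S N with hp
      by_cases hxk : x (D N) < p.1 (D N) + (p.2 (D N) - p.1 (D N)) * (1/2)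
      · rw [if_pos hxk]
        by_cases hk : D N = k
        · subst hk
          simp only [Function.update_self, if_pos trivial]
          ring
        · simp only [Function.update_of_ne (Ne.symm hk), if_neg hk, one_mul]
      · rw [if_neg hxk]
        by_cases hk : D N = k
        · subst hk
          simp only [Function.update_self, if_pos trivial]
          ring
        · simp only [Function.update_of_ne (Ne.symm hk), if_neg hk, one_mul]
    rw [hstep, ih, Finset.range_add_one, Finset.filter_insert]
    by_cases hk : D N = k
    · rw [if_pos hk, if_pos hk, Finset.card_insert_of_notMem (by simp), pow_succ]; ring
    · rw [if_neg hk, if_neg hk, one_mul]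

lemma diam_box {d : ℕ} (a b : Fin d → ℝ) (hab : ∀ k, a k ≤ b k) :
    Metric.diam (box a b) = Real.sqrt (∑ k, (b k - a k)^2) := by
  have key : ∀ x ∈ box a b, ∀ y ∈ box a b,
      dist x y ≤ Real.sqrt (∑ k, (b k - a k)^2) := by
    intro x hx y hy
    rw [EuclideanSpace.dist_eq]
    apply Real.sqrt_le_sqrt
    apply Finset.sum_le_sum
    intro k _
    have h1 := hx k; have h2 := hy k
    have habs : |x k - y k| ≤ b k - a k := by
      rw [abs_sub_le_iff]
      constructor
      · linarith [h1.1, h1.2, h2.1, h2.2]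
      · linarith [h1.1, h1.2, h2.1, h2.2]
    calc dist (x k) (y k) ^ 2 = |x k - y k| ^ 2 := by rw [Real.dist_eq]
      _ ≤ (b k - a k)^2 := pow_le_pow_left₀ (abs_nonneg _) habs 2
  refine le_antisymm (Metric.diam_le_of_forall_dist_le (Real.sqrt_nonneg _) key) ?_
  have hbdd : Bornology.IsBounded (box a b) := Metric.isBounded_iff.2 ⟨_, key⟩
  set A : Euc d := (WithLp.equiv 2 (Fin d → ℝ)).symm a with hA
  set B : Euc d := (WithLp.equiv 2 (Fin d → ℝ)).symm b with hB
  have hAm : A ∈ box a b := by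
    intro k
    simp only [hA, WithLp.equiv_symm_apply, PiLp.toLp_apply]
    exact ⟨le_refl _, hab k⟩
  have hBm : B ∈ box a b := by
    intro k
    simp only [hB, WithLp.equiv_symm_apply, PiLp.toLp_apply]
    exact ⟨hab k, le_refl _⟩
  have hdist : dist A B = Real.sqrt (∑ k, (b k - a k)^2) := by
    rw [EuclideanSpace.dist_eq]
    congr 1
    apply Finset.sum_congr rfl
    intro k _
    simp only [hA, hB, WithLp.equiv_symm_apply, PiLp.toLp_apply, Real.dist_eq, sq_abs]
    ring
  rw [← hdist]
  exact Metric.dist_le_diam_of_mem hbdd hAm hBm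

lemma chernoff_bound {Ω : Type*} [MeasurableSpace Ω] {μ : Measure Ω} [IsProbabilityMeasure μ]
    {d : ℕ} (hd : 1 ≤ d) {D : ℕ → Ω → Fin d} (hm : ∀ i, Measurable (D i))
    (hind : iIndepFun D μ)
    (hunif : ∀ i k, μ {ω | D i ω = k} = (d : ℝ≥0∞)⁻¹)
    (k : Fin d) (N : ℕ) {β : ℝ} (hβ : 0 < β) (t : ℝ) :
    μ {ω | β ^ t ≤ β ^ ((((Finset.range N).filter (fun i => D i ω = k)).card : ℝ))} ≤
      ENNReal.ofReal ((1 - (1 - β) / d) ^ N * β ^ (-t)) := by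
  classical
  have hd0 : (0:ℝ) < d := by exact_mod_cast Nat.lt_of_lt_of_le Nat.zero_lt_one hd
  have hd1 : (1:ℝ) ≤ d := by exact_mod_cast hd
  have hpos : (0:ℝ) < 1 - (1 - β) / d := by
    have h : 1 - (1 - β) / d = ((d - 1) + β) / d := by field_simp; ring
    rw [h]
    apply div_pos (by linarith) hd0
  set b : ℝ≥0∞ := ENNReal.ofReal β with hb
  set g : ℕ → Ω → ℝ≥0∞ := fun i ω => if D i ω = k then b else 1 with hg
  have hgm : ∀ i, Measurable (g i) := fun i =>
    Measurable.ite (hm i (measurableSet_singleton k)) measurable_const measurable_const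
  have hgind : iIndepFun g μ :=
    hind.comp (fun _ (j : Fin d) => if j = k then b else 1)
      (fun _ => measurable_of_countable _)
  have hsingle : ∀ i, ∫⁻ ω, g i ω ∂μ = ENNReal.ofReal (1 - (1 - β) / d) := by
    intro i
    have hA : MeasurableSet {ω | D i ω = k} := hm i (measurableSet_singleton k)
    rw [← lintegral_add_compl _ hA]
    have h1 : ∫⁻ ω in {ω | D i ω = k}, g i ω ∂μ = b * (d : ℝ≥0∞)⁻¹ := by
      have hc : ∀ᵐ ω ∂μ, ω ∈ {ω | D i ω = k} → g i ω = (fun _ => b) ω :=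
        ae_of_all _ fun ω hω => if_pos hω
      rw [setLIntegral_congr_fun_ae hA hc, setLIntegral_const, hunif i k]
    have h2 : ∫⁻ ω in {ω | D i ω = k}ᶜ, g i ω ∂μ = 1 - (d : ℝ≥0∞)⁻¹ := by
      have hc : ∀ᵐ ω ∂μ, ω ∈ {ω | D i ω = k}ᶜ → g i ω = (fun _ => (1:ℝ≥0∞)) ω :=
        ae_of_all _ fun ω hω => if_neg hω
      rw [setLIntegral_congr_fun_ae hA.compl hc, setLIntegral_const, one_mul,
        prob_compl_eq_one_sub hA, hunif i k]
    rw [h1, h2]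
    have h3 : ENNReal.ofReal ((d:ℝ)⁻¹) = (d : ℝ≥0∞)⁻¹ := by
      rw [ENNReal.ofReal_inv_of_pos hd0, ENNReal.ofReal_natCast]
    have h4 : ((1:ℝ) - (1 - β) / d) = β * (d:ℝ)⁻¹ + (1 - (d:ℝ)⁻¹) := by
      field_simp; ring
    rw [h4, ENNReal.ofReal_add (by positivity)
        (by rw [sub_nonneg]; exact inv_le_one_of_one_le₀ hd1),
      ENNReal.ofReal_mul hβ.le, h3, ENNReal.ofReal_sub _ (by positivity), h3,
      ENNReal.ofReal_one]
  have hprodint : ∀ n, ∫⁻ ω, ∏ i ∈ Finset.range n, g i ω ∂μ =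
      (ENNReal.ofReal (1 - (1 - β) / d)) ^ n := by
    intro n
    induction n with
    | zero => simp
    | succ n ih =>
      have hfeq : (∏ j ∈ Finset.range n, g j) = fun ω => ∏ j ∈ Finset.range n, g j ω := by
        funext ω; simp [Finset.prod_apply]
      have hindep : IndepFun (fun ω => ∏ j ∈ Finset.range n, g j ω) (g n) μ := by
        rw [← hfeq]; exact hgind.indepFun_prod_range_succ hgm n
      have hmul := lintegral_mul_eq_lintegral_mul_lintegral_of_indepFun
        (μ := μ) (f := fun ω => ∏ j ∈ Finset.range n, g j ω) (g := g n)
        (Finset.measurable_prod _ fun i _ => hgm i) (hgm n) hindep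
      calc ∫⁻ ω, ∏ i ∈ Finset.range (n+1), g i ω ∂μ
          = ∫⁻ ω, (∏ j ∈ Finset.range n, g j ω) * g n ω ∂μ := by
            apply lintegral_congr; intro ω; rw [Finset.prod_range_succ]
        _ = (∫⁻ ω, ∏ j ∈ Finset.range n, g j ω ∂μ) * ∫⁻ ω, g n ω ∂μ := hmul
        _ = (ENNReal.ofReal (1 - (1 - β) / d)) ^ (n+1) := by
            rw [ih, hsingle n, pow_succ]
  set ε : ℝ≥0∞ := ENNReal.ofReal (β ^ t) with hε
  have hrt : (0:ℝ) < β ^ t := Real.rpow_pos_of_pos hβ t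
  have hεpos : ε ≠ 0 := ne_of_gt (ENNReal.ofReal_pos.2 hrt)
  have hεtop : ε ≠ ∞ := ENNReal.ofReal_ne_top
  have hset : {ω | β ^ t ≤ β ^ ((((Finset.range N).filter (fun i => D i ω = k)).card : ℝ))}
      = {ω | ε ≤ ∏ i ∈ Finset.range N, g i ω} := by
    ext ω
    have hfo : ∏ i ∈ Finset.range N, g i ω
        = ENNReal.ofReal (β ^ (((Finset.range N).filter (fun i => D i ω = k)).card)) := by
      show (∏ i ∈ Finset.range N, if D i ω = k then b else 1) = _
      rw [← Finset.prod_filter, Finset.prod_const, hb, ← ENNReal.ofReal_pow hβ.le]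
    simp only [Set.mem_setOf_eq, hfo, hε,
      ENNReal.ofReal_le_ofReal_iff (pow_nonneg hβ.le _), Real.rpow_natCast]
  have hmark := mul_meas_ge_le_lintegral₀
    (μ := μ) (f := fun ω => ∏ i ∈ Finset.range N, g i ω)
    (Finset.measurable_prod _ fun i _ => hgm i).aemeasurable ε
  rw [hprodint N] at hmark
  have hle : μ {ω | ε ≤ ∏ i ∈ Finset.range N, g i ω}
      ≤ (ENNReal.ofReal (1 - (1 - β) / d)) ^ N / ε := by
    rw [ENNReal.le_div_iff_mul_le (Or.inl hεpos) (Or.inl hεtop), mul_comm]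
    exact hmark
  have hfin : (ENNReal.ofReal (1 - (1 - β) / d)) ^ N / ε
      = ENNReal.ofReal ((1 - (1 - β) / d) ^ N * β ^ (-t)) := by
    rw [ENNReal.ofReal_mul (by positivity), ← ENNReal.ofReal_pow hpos.le,
      Real.rpow_neg hβ.le, div_eq_mul_inv, hε,
      ENNReal.ofReal_inv_of_pos hrt]
  rw [hset]
  exact hle.trans_eq hfin

lemma union_chernoff {Ω : Type*} [MeasurableSpace Ω] {μ : Measure Ω} [IsProbabilityMeasure μ]
    {d : ℕ} (hd : 1 ≤ d) {D : ℕ → Ω → Fin d} (hm : ∀ i, Measurable (D i))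
    (hind : iIndepFun D μ)
    (hunif : ∀ i k, μ {ω | D i ω = k} = (d : ℝ≥0∞)⁻¹)
    (N : ℕ) {β : ℝ} (hβ : 0 < β) (t : ℝ) {A : Set Ω}
    (hA : ∀ᵐ ω ∂μ, ω ∈ A → ∃ k : Fin d,
      β ^ t ≤ β ^ ((((Finset.range N).filter (fun i => D i ω = k)).card : ℝ))) :
    μ A ≤ ENNReal.ofReal ((d:ℝ) * ((1 - (1 - β) / d) ^ N * β ^ (-t))) := by
  classical
  have h1 : μ A ≤ μ (⋃ k : Fin d, {ω | β ^ t ≤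
      β ^ ((((Finset.range N).filter (fun i => D i ω = k)).card : ℝ))}) := by
    apply measure_mono_ae
    filter_upwards [hA] with ω h hω
    obtain ⟨k, hk⟩ := h hω
    exact Set.mem_iUnion.2 ⟨k, hk⟩
  have hnn : (0:ℝ) ≤ (1 - (1 - β) / d) ^ N * β ^ (-t) := by
    have hd0 : (0:ℝ) < d := by exact_mod_cast Nat.lt_of_lt_of_le Nat.zero_lt_one hd
    have hpos : (0:ℝ) < 1 - (1 - β) / d := by
      have h : 1 - (1 - β) / d = ((d - 1) + β) / d := by field_simp; ring
      rw [h]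
      apply div_pos (by exact_mod_cast by nlinarith [hd0] : (0:ℝ) < (d:ℝ) - 1 + β) hd0
    positivity
  calc μ A ≤ _ := h1
    _ ≤ ∑' k : Fin d, μ {ω | β ^ t ≤
        β ^ ((((Finset.range N).filter (fun i => D i ω = k)).card : ℝ))} :=
      measure_iUnion_le _
    _ = ∑ k : Fin d, μ {ω | β ^ t ≤
        β ^ ((((Finset.range N).filter (fun i => D i ω = k)).card : ℝ))} := tsum_fintype _
    _ ≤ ∑ _k : Fin d, ENNReal.ofReal ((1 - (1 - β) / d) ^ N * β ^ (-t)) :=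
      Finset.sum_le_sum fun k _ => chernoff_bound hd hm hind hunif k N hβ t
    _ = (d : ℝ≥0∞) * ENNReal.ofReal ((1 - (1 - β) / d) ^ N * β ^ (-t)) := by
      rw [Finset.sum_const, Finset.card_univ, Fintype.card_fin, nsmul_eq_mul]
    _ = ENNReal.ofReal ((d:ℝ) * ((1 - (1 - β) / d) ^ N * β ^ (-t))) := by
      rw [← ENNReal.ofReal_natCast d, ← ENNReal.ofReal_mul (Nat.cast_nonneg d)]


/-- deviation bounds for the diameter of centered random tree cells
(Proposition `prop:diam_CRT`). -/
theorem statement15 {d N : ℕ} (hd : 2 ≤ d)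
    {Ω : Type*} [MeasurableSpace Ω] {μ : Measure Ω} [IsProbabilityMeasure μ]
    (x : Euc d) (hx : ∀ j, x j ∈ Set.Icc (0:ℝ) 1)
    (D : ℕ → Ω → Fin d) (S : ℕ → Ω → ℝ)
    (hsplit : CenteredSplits μ d D S) :
    (∀ α : ℝ, α ∈ Set.Ioo (0 : ℝ) (1 / (d : ℝ)) →
      μ {ω | Real.sqrt d * (2 : ℝ) ^ (-(α * N)) ≤
          Metric.diam (treeCell d x (fun i => D i ω) (fun i => S i ω) N)} ≤
        ENNReal.ofReal ((d : ℝ) * (1 - (1 - ((d : ℝ) - 1) * α / (1 - α)) / d) ^ N *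
          (((d : ℝ) - 1) * α / (1 - α)) ^ (-(α * N))))
    ∧ (∀ α : ℝ, α ∈ Set.Ioo (1 / (d : ℝ)) 1 →
      μ {ω | Metric.diam (treeCell d x (fun i => D i ω) (fun i => S i ω) N) ≤
          Real.sqrt d * (2 : ℝ) ^ (-(α * N))} ≤
        ENNReal.ofReal ((d : ℝ) * (1 - (1 - ((d : ℝ) - 1) * α / (1 - α)) / d) ^ N *
          (((d : ℝ) - 1) * α / (1 - α)) ^ (-(α * N)))) := by
  obtain ⟨hDm, hDind, hDunif, hS⟩ := hsplit
  have hd1 : 1 ≤ d := le_trans (by norm_num) hd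
  have hdR : (2:ℝ) ≤ d := by exact_mod_cast hd
  have hd0 : (0:ℝ) < d := by linarith
  haveI : Nonempty (Fin d) := ⟨⟨0, by omega⟩⟩
  have hSae : ∀ᵐ ω ∂μ, ∀ i, S i ω = 1/2 := ae_all_iff.2 hS
  have hhalf : ∀ n : ℕ, ((1/2:ℝ))^n = (2:ℝ) ^ (-(n:ℝ)) := by
    intro n
    rw [one_div, inv_pow, Real.rpow_neg (by norm_num), Real.rpow_natCast]
  constructor
  · intro α hα
    obtain ⟨hα0, hα2⟩ := hα
    have hα1 : α < 1 := lt_of_lt_of_le hα2 (by rw [div_le_one hd0]; linarith)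
    have h1α : (0:ℝ) < 1 - α := by linarith
    set β : ℝ := ((d:ℝ) - 1) * α / (1 - α) with hβdef
    have hβ0 : 0 < β := div_pos (by nlinarith) h1α
    have hαd : α * d < 1 := by
      have := (lt_div_iff₀ hd0).1 hα2
      linarith
    have hβ1 : β < 1 := by
      rw [hβdef, div_lt_one h1α]
      nlinarith
    set t : ℝ := α * N with ht
    have hincl : ∀ᵐ ω ∂μ, ω ∈ {ω | Real.sqrt d * (2 : ℝ) ^ (-(α * (N:ℝ))) ≤
        Metric.diam (treeCell d x (fun i => D i ω) (fun i => S i ω) N)} →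
        ∃ k : Fin d, β ^ t ≤
          β ^ ((((Finset.range N).filter (fun i => D i ω = k)).card : ℝ)) := by
      filter_upwards [hSae] with ω hSω hω
      set C : Fin d → ℕ := fun k => ((Finset.range N).filter (fun i => D i ω = k)).card with hC
      have hside : ∀ k, cellSide d x (fun i => D i ω) (fun i => S i ω) N k = (1/2:ℝ) ^ (C k) :=
        fun k => cellSide_eq d x _ _ hSω N k
      have hab : ∀ k, (treeEndpoints d x (fun i => D i ω) (fun i => S i ω) N).1 k ≤
          (treeEndpoints d x (fun i => D i ω) (fun i => S i ω) N).2 k := by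
        intro k
        have h := hside k
        have h' : (treeEndpoints d x (fun i => D i ω) (fun i => S i ω) N).2 k -
            (treeEndpoints d x (fun i => D i ω) (fun i => S i ω) N).1 k = (1/2:ℝ) ^ (C k) := h
        nlinarith [pow_nonneg (by norm_num : (0:ℝ) ≤ 1/2) (C k)]
      have hdiam : Metric.diam (treeCell d x (fun i => D i ω) (fun i => S i ω) N)
          = Real.sqrt (∑ k, ((1/2:ℝ) ^ (C k))^2) := by
        rw [show treeCell d x (fun i => D i ω) (fun i => S i ω) N =
          box (treeEndpoints d x (fun i => D i ω) (fun i => S i ω) N).1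
            (treeEndpoints d x (fun i => D i ω) (fun i => S i ω) N).2 from rfl,
          diam_box _ _ hab]
        congr 1
        exact Finset.sum_congr rfl fun k _ => congrArg (· ^ 2) (hside k)
      set c : ℝ := (2:ℝ) ^ (-(α * (N:ℝ))) with hc
      have hc0 : 0 < c := Real.rpow_pos_of_pos (by norm_num) _
      have h1 : Real.sqrt d * c ≤ Real.sqrt (∑ k, ((1/2:ℝ) ^ (C k))^2) := by
        rw [← hdiam]; exact hω
      have hsum0 : (0:ℝ) ≤ ∑ k, ((1/2:ℝ) ^ (C k))^2 := by positivity
      have h2 : (d:ℝ) * c^2 ≤ ∑ k, ((1/2:ℝ) ^ (C k))^2 := by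
        have h3 := pow_le_pow_left₀ (by positivity) h1 2
        rw [Real.sq_sqrt hsum0, mul_pow, Real.sq_sqrt hd0.le] at h3
        exact h3
      have hex : ∃ k, c ≤ (1/2:ℝ) ^ (C k) := by
        by_contra hcon
        push_neg at hcon
        have hlt : ∑ k, ((1/2:ℝ) ^ (C k))^2 < ∑ _k : Fin d, c^2 :=
          Finset.sum_lt_sum_of_nonempty Finset.univ_nonempty fun k _ =>
            pow_lt_pow_left₀ (hcon k) (by positivity) two_ne_zero
        rw [Finset.sum_const, Finset.card_univ, Fintype.card_fin, nsmul_eq_mul] at hlt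
        linarith
      obtain ⟨k, hk⟩ := hex
      refine ⟨k, ?_⟩
      have hCk : ((C k : ℝ)) ≤ t := by
        rw [hhalf (C k), hc] at hk
        have := (Real.rpow_le_rpow_left_iff (by norm_num : (1:ℝ) < 2)).1 hk
        rw [ht]; linarith
      exact Real.rpow_le_rpow_of_exponent_ge hβ0 hβ1.le hCk
    have hU := union_chernoff hd1 hDm hDind hDunif N hβ0 t hincl
    rwa [← mul_assoc] at hU
  · intro α hα
    obtain ⟨hα0, hα2⟩ := hα
    have hα0' : (0:ℝ) < α := lt_trans (by positivity) hα0
    have h1α : (0:ℝ) < 1 - α := by linarith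
    set β : ℝ := ((d:ℝ) - 1) * α / (1 - α) with hβdef
    have hβ0 : 0 < β := div_pos (by nlinarith) h1α
    have hαd : 1 < α * d := by
      have := (div_lt_iff₀ hd0).1 hα0
      linarith
    have hβ1 : 1 < β := by
      rw [hβdef, lt_div_iff₀ h1α]
      nlinarith
    set t : ℝ := α * N with ht
    have hincl : ∀ᵐ ω ∂μ, ω ∈ {ω |
        Metric.diam (treeCell d x (fun i => D i ω) (fun i => S i ω) N) ≤
          Real.sqrt d * (2 : ℝ) ^ (-(α * (N:ℝ)))} →
        ∃ k : Fin d, β ^ t ≤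
          β ^ ((((Finset.range N).filter (fun i => D i ω = k)).card : ℝ)) := by
      filter_upwards [hSae] with ω hSω hω
      set C : Fin d → ℕ := fun k => ((Finset.range N).filter (fun i => D i ω = k)).card with hC
      have hside : ∀ k, cellSide d x (fun i => D i ω) (fun i => S i ω) N k = (1/2:ℝ) ^ (C k) :=
        fun k => cellSide_eq d x _ _ hSω N k
      have hab : ∀ k, (treeEndpoints d x (fun i => D i ω) (fun i => S i ω) N).1 k ≤
          (treeEndpoints d x (fun i => D i ω) (fun i => S i ω) N).2 k := by
        intro k
        have h' : (treeEndpoints d x (fun i => D i ω) (fun i => S i ω) N).2 k -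
            (treeEndpoints d x (fun i => D i ω) (fun i => S i ω) N).1 k = (1/2:ℝ) ^ (C k) :=
          hside k
        nlinarith [pow_nonneg (by norm_num : (0:ℝ) ≤ 1/2) (C k)]
      have hdiam : Metric.diam (treeCell d x (fun i => D i ω) (fun i => S i ω) N)
          = Real.sqrt (∑ k, ((1/2:ℝ) ^ (C k))^2) := by
        rw [show treeCell d x (fun i => D i ω) (fun i => S i ω) N =
          box (treeEndpoints d x (fun i => D i ω) (fun i => S i ω) N).1
            (treeEndpoints d x (fun i => D i ω) (fun i => S i ω) N).2 from rfl,
          diam_box _ _ hab]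
        congr 1
        exact Finset.sum_congr rfl fun k _ => congrArg (· ^ 2) (hside k)
      set c : ℝ := (2:ℝ) ^ (-(α * (N:ℝ))) with hc
      have hc0 : 0 < c := Real.rpow_pos_of_pos (by norm_num) _
      have hsum0 : (0:ℝ) ≤ ∑ k, ((1/2:ℝ) ^ (C k))^2 := by positivity
      have h1 : Real.sqrt (∑ k, ((1/2:ℝ) ^ (C k))^2) ≤ Real.sqrt d * c := by
        rw [← hdiam]; exact hω
      have h2 : ∑ k, ((1/2:ℝ) ^ (C k))^2 ≤ (d:ℝ) * c^2 := by
        have h3 := pow_le_pow_left₀ (Real.sqrt_nonneg _) h1 2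
        rw [Real.sq_sqrt hsum0, mul_pow, Real.sq_sqrt hd0.le] at h3
        exact h3
      by_contra hcon
      push_neg at hcon
      have hlt : ∑ _k : Fin d, c^2 < ∑ k, ((1/2:ℝ) ^ (C k))^2 := by
        apply Finset.sum_lt_sum_of_nonempty Finset.univ_nonempty
        intro k _
        have hCk : (C k : ℝ) < t := by
          by_contra hge
          push_neg at hge
          exact absurd (Real.rpow_le_rpow_of_exponent_le hβ1.le hge) (not_le.2 (hcon k))
        have : c < (1/2:ℝ) ^ (C k) := by
          rw [hhalf (C k), hc]
          exact (Real.rpow_lt_rpow_left_iff (by norm_num : (1:ℝ) < 2)).2 (by rw [ht] at hCk; linarith)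
        exact pow_lt_pow_left₀ this hc0.le two_ne_zero
      rw [Finset.sum_const, Finset.card_univ, Fintype.card_fin, nsmul_eq_mul] at hlt
      linarith
    have hU := union_chernoff hd1 hDm hDind hDunif N hβ0 t hincl
    rwa [← mul_assoc] at hU


end
end

section
/- For the cell 𝒱(x) of a centered random tree in dimension d ≥ 2, grown with an infinite i.i.d. sequence of split directions: almost surely there exists n_0 ≥ 1 such that for all N ≥ n_0, √d · 2^{−N/d−2√((d−1)N log(N)/d²)} ≤ diam(𝒱(x)) ≤ √d · 2^{−N/d+2√((d−1)N log(N)/d²)}. Consequently, with λ(𝒱(x)) = 2^{−N} and the normalized diameter diam^#(𝒱(x)) := diam(𝒱(x))/√d, for all N large enough: 2^{−2√((d−1)N log N)} ≤ diam^#(𝒱(x))^d / λ(𝒱(x)) ≤ 2^{2√((d−1)N log N)}. -/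
open MeasureTheory ProbabilityTheory Real Set
open scoped ENNReal Classical

noncomputable section

lemma exp_cubic {u : ℝ} (hu : |u| ≤ 1) : Real.exp u ≤ 1 + u + u^2/2 + |u|^3 := by
  have h := Real.exp_bound hu (n := 3) (by norm_num)
  have hs : ∑ m ∈ Finset.range 3, u ^ m / (Nat.factorial m : ℝ) = 1 + u + u^2/2 := by
    simp [Finset.sum_range_succ, Nat.factorial]
  rw [hs] at h
  have h2 : Real.exp u - (1 + u + u^2/2) ≤ |u|^3 * ((3:ℕ).succ / ((Nat.factorial 3 : ℕ) * (3:ℕ))) :=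
    (abs_le.mp h).2
  have : ((3:ℕ).succ : ℝ) / ((Nat.factorial 3 : ℕ) * (3:ℕ)) ≤ 1 := by norm_num [Nat.factorial]
  nlinarith [pow_nonneg (abs_nonneg u) 3]

lemma bern_bd {p l : ℝ} (hp0 : 0 ≤ p) (hp1 : p ≤ 1) (hl : |l| ≤ 1) :
    p * Real.exp (l*(1-p)) + (1-p) * Real.exp (-(l*p)) ≤
      Real.exp (p*(1-p)*(l^2/2 + |l|^3)) := by
  have hq0 : 0 ≤ 1 - p := by linarith
  have h1 : Real.exp (l*(1-p)) ≤ 1 + l*(1-p) + (l*(1-p))^2/2 + |l|^3*(1-p)^3 := by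
    have := exp_cubic (u := l*(1-p)) ?_
    · rw [abs_mul, abs_of_nonneg hq0] at this; nlinarith [this]
    · rw [abs_mul, abs_of_nonneg hq0]
      calc |l| * (1-p) ≤ 1 * 1 := mul_le_mul hl (by linarith) hq0 zero_le_one
      _ = 1 := one_mul 1
  have h2 : Real.exp (-(l*p)) ≤ 1 + (-(l*p)) + (l*p)^2/2 + |l|^3*p^3 := by
    have := exp_cubic (u := -(l*p)) ?_
    · rw [abs_neg, abs_mul, abs_of_nonneg hp0] at this; nlinarith [this]
    · rw [abs_neg, abs_mul, abs_of_nonneg hp0]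
      calc |l| * p ≤ 1 * 1 := mul_le_mul hl hp1 hp0 zero_le_one
      _ = 1 := one_mul 1
  have hl3 : 0 ≤ |l|^3 := pow_nonneg (abs_nonneg l) 3
  have expand : p*(1 + l*(1-p) + (l*(1-p))^2/2 + |l|^3*(1-p)^3)
      + (1-p)*(1 + (-(l*p)) + (l*p)^2/2 + |l|^3*p^3)
      = 1 + p*(1-p)*l^2/2 + |l|^3*(p*(1-p)*(p^2+(1-p)^2)) := by ring
  have h3 : |l|^3*(p*(1-p)*(p^2+(1-p)^2)) ≤ |l|^3*(p*(1-p)) := by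
    apply mul_le_mul_of_nonneg_left _ hl3
    nlinarith [mul_nonneg hp0 hq0, sq_nonneg (p*(1-p))]
  calc p * Real.exp (l*(1-p)) + (1-p) * Real.exp (-(l*p))
      ≤ p*(1 + l*(1-p) + (l*(1-p))^2/2 + |l|^3*(1-p)^3)
        + (1-p)*(1 + (-(l*p)) + (l*p)^2/2 + |l|^3*p^3) := by
        have := mul_le_mul_of_nonneg_left h1 hp0
        have := mul_le_mul_of_nonneg_left h2 hq0
        linarith
  _ = 1 + p*(1-p)*l^2/2 + |l|^3*(p*(1-p)*(p^2+(1-p)^2)) := expand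
  _ ≤ 1 + p*(1-p)*(l^2/2 + |l|^3) := by nlinarith [h3]
  _ ≤ Real.exp (p*(1-p)*(l^2/2 + |l|^3)) := by
      have := Real.add_one_le_exp (p*(1-p)*(l^2/2 + |l|^3)); linarith

lemma volume_box {d : ℕ} (a b : Fin d → ℝ) :
    volume (box a b) = ∏ k, ENNReal.ofReal (b k - a k) := by
  have hbox : box a b = (MeasurableEquiv.toLp 2 (Fin d → ℝ)).symm ⁻¹'
      (Set.univ.pi fun k => Set.Icc (a k) (b k)) := by
    ext x
    simp only [box, Set.mem_setOf_eq, Set.mem_preimage, Set.mem_pi, Set.mem_univ,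
      forall_true_left, Set.mem_Icc]
    rfl
  rw [hbox, (EuclideanSpace.volume_preserving_symm_measurableEquiv_toLp (Fin d)).measure_preimage]
  · rw [volume_pi_pi]
    simp [Real.volume_Icc]
  · exact (MeasurableSet.univ_pi fun k => measurableSet_Icc).nullMeasurableSet

def cntK {d : ℕ} (D : ℕ → Fin d) (k : Fin d) (N : ℕ) : ℕ :=
  ((Finset.range N).filter fun i => D i = k).card

lemma cntK_succ {d : ℕ} (D : ℕ → Fin d) (k : Fin d) (N : ℕ) :
    cntK D k (N+1) = cntK D k N + (if D N = k then 1 else 0) := by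
  unfold cntK
  rw [Finset.range_add_one, Finset.filter_insert]
  split_ifs with h
  · rw [Finset.card_insert_of_notMem (by simp)]
  · simp

lemma cntK_sum {d : ℕ} (D : ℕ → Fin d) (N : ℕ) : ∑ k, cntK D k N = N := by
  unfold cntK
  simp_rw [Finset.card_filter]
  rw [Finset.sum_comm]
  simp

lemma side_eq {d : ℕ} (x : Euc d) (D : ℕ → Fin d) (S : ℕ → ℝ) (hS : ∀ i, S i = 1/2) :
    ∀ N k, (treeEndpoints d x D S N).2 k - (treeEndpoints d x D S N).1 k
      = (1/2:ℝ)^(cntK D k N) := by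
  intro N
  induction N with
  | zero => intro k; simp [treeEndpoints, cntK]
  | succ N ih =>
    intro k
    rw [cntK_succ]
    show (treeEndpoints d x D S (N+1)).2 k - (treeEndpoints d x D S (N+1)).1 k = _
    rw [treeEndpoints]
    set p := treeEndpoints d x D S N with hp
    set c := p.1 (D N) + (p.2 (D N) - p.1 (D N)) * S N with hc
    have hcmid : c - p.1 (D N) = (1/2:ℝ)^(cntK D (D N) N + 1) ∧
        p.2 (D N) - c = (1/2:ℝ)^(cntK D (D N) N + 1) := by
      have := ih (D N)
      rw [hc, hS N]
      constructor <;> [skip; skip] <;> (rw [pow_succ]; nlinarith [this])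
    by_cases hk : k = D N
    · subst hk
      rw [if_pos rfl]
      split_ifs with h
      · simpa only [Function.update_self] using hcmid.1
      · simpa only [Function.update_self] using hcmid.2
    · have hk' : D N ≠ k := fun h => hk h.symm
      rw [if_neg hk', add_zero]
      split_ifs with h
      · simp only [Function.update_of_ne hk]; exact ih k
      · simp only [Function.update_of_ne hk]; exact ih k

/-- The deviation threshold appearing in the statement. -/
noncomputable def tFun (d N : ℕ) : ℝ := 2 * Real.sqrt (((d:ℝ)-1)*N*Real.log N/(d:ℝ)^2)

/-- The Chernoff parameter. -/
noncomputable def lFun (d N : ℕ) : ℝ := tFun d N * (d:ℝ)^2/(N*((d:ℝ)-1))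

lemma tFun_nonneg (d N : ℕ) : 0 ≤ tFun d N := by unfold tFun; positivity

lemma lFun_nonneg (d N : ℕ) (hd : 2 ≤ d) (hN : 1 ≤ N) : 0 ≤ lFun d N := by
  have h1 : (1:ℝ) ≤ (d:ℝ) - 1 := by
    have : (2:ℝ) ≤ d := by exact_mod_cast hd
    linarith
  have h2 : (0:ℝ) < N := by exact_mod_cast hN
  unfold lFun
  have := tFun_nonneg d N
  positivity

lemma tFun_sq (d N : ℕ) (hd : 2 ≤ d) (hN : 1 ≤ N) :
    (tFun d N)^2 = 4*(((d:ℝ)-1)*N*Real.log N/(d:ℝ)^2) := by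
  have h1 : (1:ℝ) ≤ (d:ℝ) - 1 := by
    have : (2:ℝ) ≤ d := by exact_mod_cast hd
    linarith
  have hlog : 0 ≤ Real.log N := Real.log_nonneg (by exact_mod_cast hN)
  have hA : 0 ≤ ((d:ℝ)-1)*N*Real.log N/(d:ℝ)^2 := by positivity
  unfold tFun
  rw [mul_pow, Real.sq_sqrt hA]; ring

lemma lFun_mul_tFun (d N : ℕ) (hd : 2 ≤ d) (hN : 1 ≤ N) :
    lFun d N * tFun d N = 4 * Real.log N := by
  have h1 : (1:ℝ) ≤ (d:ℝ) - 1 := by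
    have : (2:ℝ) ≤ d := by exact_mod_cast hd
    linarith
  have h2 : (0:ℝ) < N := by exact_mod_cast hN
  have hd0 : (0:ℝ) < d := by positivity
  have key : lFun d N * tFun d N = (tFun d N)^2 * (d:ℝ)^2/(N*((d:ℝ)-1)) := by
    unfold lFun; ring
  rw [key, tFun_sq d N hd hN]
  field_simp

lemma NpqL (d N : ℕ) (hd : 2 ≤ d) (hN : 1 ≤ N) :
    (N:ℝ) * ((d:ℝ)⁻¹*(1-(d:ℝ)⁻¹)) * lFun d N = tFun d N := by
  have h1 : (1:ℝ) ≤ (d:ℝ) - 1 := by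
    have : (2:ℝ) ≤ d := by exact_mod_cast hd
    linarith
  have h2 : (0:ℝ) < N := by exact_mod_cast hN
  have hd0 : (0:ℝ) < d := by positivity
  unfold lFun
  field_simp

lemma exponent_le (d N : ℕ) (hd : 2 ≤ d) (hN : 1 ≤ N) (hl8 : lFun d N ≤ 1/8) :
    Real.exp (-(lFun d N)*(tFun d N)
        + N * ((d:ℝ)⁻¹*(1-(d:ℝ)⁻¹)*((lFun d N)^2/2 + (lFun d N)^3)))
      ≤ (N:ℝ)^(-3/2 : ℝ) := by
  have hlog : 0 ≤ Real.log N := Real.log_nonneg (by exact_mod_cast hN)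
  have h2 : (0:ℝ) < N := by exact_mod_cast hN
  have hl0 : 0 ≤ lFun d N := lFun_nonneg d N hd hN
  set l := lFun d N
  set t := tFun d N
  have hNpqL := NpqL d N hd hN
  have hlt := lFun_mul_tFun d N hd hN
  have hident : -l*t + N * ((d:ℝ)⁻¹*(1-(d:ℝ)⁻¹)*(l^2/2 + l^3))
      = -(l*t)/2 + l*(l*t) := by
    linear_combination (l/2 + l^2) * hNpqL
  rw [hident, hlt]
  have hexp : -(4*Real.log N)/2 + l*(4*Real.log N) ≤ -(3/2)*Real.log N := by
    nlinarith
  calc Real.exp (-(4*Real.log N)/2 + l*(4*Real.log N)) ≤ Real.exp (-(3/2)*Real.log N) :=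
        Real.exp_le_exp.2 hexp
  _ = (N:ℝ)^(-3/2 : ℝ) := by
      rw [Real.rpow_def_of_pos h2]; ring_nf

lemma lFun_small (d : ℕ) (hd : 2 ≤ d) :
    ∀ N : ℕ, max 2 ((512*d^2)^2) ≤ N → lFun d N ≤ 1/8 := by
  intro N hN
  have hN2 : 2 ≤ N := le_trans (le_max_left _ _) hN
  have hN1 : 1 ≤ N := le_trans (by norm_num) hN2
  have h1 : (1:ℝ) ≤ (d:ℝ) - 1 := by
    have : (2:ℝ) ≤ d := by exact_mod_cast hd
    linarith
  have h2 : (0:ℝ) < N := by exact_mod_cast hN1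
  have hd0 : (0:ℝ) < d := by positivity
  have hlog : 0 ≤ Real.log N := Real.log_nonneg (by exact_mod_cast hN1)
  have hl0 : 0 ≤ lFun d N := lFun_nonneg d N hd hN1
  -- l^2 = 4 d^2 log N / (N (d-1))
  have hsq : (lFun d N)^2 = 4*(d:ℝ)^2*Real.log N/((N:ℝ)*((d:ℝ)-1)) := by
    have key : (lFun d N)^2 = (tFun d N)^2 * (d:ℝ)^4/((N:ℝ)^2*((d:ℝ)-1)^2) := by
      unfold lFun; rw [div_pow, mul_pow, mul_pow]; ring
    rw [key, tFun_sq d N hd hN1, div_eq_div_iff (by positivity) (by positivity)]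
    field_simp
  -- log N ≤ 2 √N
  have hlogsqrt : Real.log N ≤ 2 * Real.sqrt N := by
    have hs0 : (0:ℝ) < Real.sqrt N := Real.sqrt_pos.2 h2
    have := Real.log_le_sub_one_of_pos hs0
    have hls : Real.log (Real.sqrt N) = Real.log N / 2 := Real.log_sqrt (le_of_lt h2)
    linarith
  -- √N ≥ 512 d^2
  have hsqrtN : 512*(d:ℝ)^2 ≤ Real.sqrt N := by
    have hNc : ((512*d^2)^2 : ℕ) ≤ N := le_trans (le_max_right _ _) hN
    have hNc' : ((512*(d:ℝ)^2)^2 : ℝ) ≤ (N:ℝ) := by exact_mod_cast hNc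
    calc 512*(d:ℝ)^2 = Real.sqrt ((512*(d:ℝ)^2)^2) := by
          rw [Real.sqrt_sq (by positivity)]
    _ ≤ Real.sqrt N := Real.sqrt_le_sqrt hNc'
  -- conclude l^2 ≤ 1/64
  have hsq64 : (lFun d N)^2 ≤ 1/64 := by
    rw [hsq]
    have hNsqrt : Real.sqrt N * Real.sqrt N = N := Real.mul_self_sqrt (le_of_lt h2)
    have hs0 : (0:ℝ) < Real.sqrt N := Real.sqrt_pos.2 h2
    have step1 : 4*(d:ℝ)^2*Real.log N/((N:ℝ)*((d:ℝ)-1)) ≤ 4*(d:ℝ)^2*(2*Real.sqrt N)/(N:ℝ) := by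
      rw [div_le_div_iff₀ (by positivity) h2]
      have hthis : 4*(d:ℝ)^2*Real.log N ≤ 4*(d:ℝ)^2*(2*Real.sqrt N) := by
        apply mul_le_mul_of_nonneg_left hlogsqrt (by positivity)
      have ha0 : 0 ≤ 4*(d:ℝ)^2*(2*Real.sqrt N) := by positivity
      calc 4*(d:ℝ)^2*Real.log N * (N:ℝ)
          ≤ 4*(d:ℝ)^2*(2*Real.sqrt N) * (N:ℝ) := mul_le_mul_of_nonneg_right hthis h2.le
      _ ≤ 4*(d:ℝ)^2*(2*Real.sqrt N) * ((N:ℝ)*((d:ℝ)-1)) := by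
          apply mul_le_mul_of_nonneg_left _ ha0
          nlinarith
    have step2 : 4*(d:ℝ)^2*(2*Real.sqrt N)/(N:ℝ) ≤ 1/64 := by
      rw [div_le_div_iff₀ h2 (by norm_num)]
      calc 4*(d:ℝ)^2*(2*Real.sqrt N) * 64 = 512*(d:ℝ)^2*Real.sqrt N := by ring
      _ ≤ Real.sqrt N * Real.sqrt N := by
          apply mul_le_mul_of_nonneg_right hsqrtN (le_of_lt hs0)
      _ = 1 * N := by rw [hNsqrt, one_mul]
    linarith
  calc lFun d N = Real.sqrt ((lFun d N)^2) := by rw [Real.sqrt_sq hl0]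
  _ ≤ Real.sqrt (1/64) := Real.sqrt_le_sqrt hsq64
  _ = 1/8 := by
      rw [show (1:ℝ)/64 = (1/8)^2 by norm_num, Real.sqrt_sq (by norm_num)]

section ProbAux
variable {Ω : Type*} [MeasurableSpace Ω] {μ : Measure Ω} [IsProbabilityMeasure μ]
  {d : ℕ} {D : ℕ → Ω → Fin d}

lemma meas_toReal (hd : 0 < d) (hmeas : ∀ i, Measurable (D i))
    (hunif : ∀ i k, μ {ω | D i ω = k} = (d : ℝ≥0∞)⁻¹) (i : ℕ) (k : Fin d) :
    (μ {ω | D i ω = k}).toReal = (d:ℝ)⁻¹ := by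
  rw [hunif i k, ENNReal.toReal_inv]; simp

lemma integral_ite (hd : 0 < d) (hmeas : ∀ i, Measurable (D i))
    (hunif : ∀ i k, μ {ω | D i ω = k} = (d : ℝ≥0∞)⁻¹) (i : ℕ) (k : Fin d) (c1 c2 : ℝ) :
    ∫ ω, (if D i ω = k then c1 else c2) ∂μ = (d:ℝ)⁻¹ * c1 + (1-(d:ℝ)⁻¹) * c2 := by
  have hA : MeasurableSet {ω | D i ω = k} := (hmeas i) (measurableSet_singleton k)
  have heq : (fun ω => if D i ω = k then c1 else c2)
      = fun ω => Set.indicator {ω | D i ω = k} (fun _ => c1 - c2) ω + c2 := by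
    funext ω
    rw [Set.indicator_apply]
    by_cases h : D i ω = k
    · rw [if_pos h, if_pos (show ω ∈ {ω | D i ω = k} from h)]; ring
    · rw [if_neg h, if_neg (show ω ∉ {ω | D i ω = k} from h)]; ring
  rw [heq, integral_add ((integrable_const (c1 - c2)).indicator hA) (integrable_const c2),
    integral_indicator_const _ hA, integral_const, measureReal_def,
    meas_toReal hd hmeas hunif i k]
  simp [smul_eq_mul]
  ring

lemma mgf_ite (hd : 0 < d) (hmeas : ∀ i, Measurable (D i))
    (hunif : ∀ i k, μ {ω | D i ω = k} = (d : ℝ≥0∞)⁻¹) (i : ℕ) (k : Fin d) (u v l : ℝ) :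
    mgf (fun ω => if D i ω = k then u else v) μ l
      = (d:ℝ)⁻¹ * Real.exp (l*u) + (1-(d:ℝ)⁻¹) * Real.exp (l*v) := by
  unfold mgf
  have : (fun ω => Real.exp (l * if D i ω = k then u else v))
      = fun ω => if D i ω = k then Real.exp (l*u) else Real.exp (l*v) := by
    funext ω; split_ifs <;> rfl
  rw [this, integral_ite hd hmeas hunif i k]


lemma chernoff_ite (hd : 0 < d) (hmeas : ∀ i, Measurable (D i))
    (hindep : iIndepFun D μ)
    (hunif : ∀ i k, μ {ω | D i ω = k} = (d : ℝ≥0∞)⁻¹)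
    (k : Fin d) (N : ℕ) (u v l t : ℝ) (hu : |u| ≤ 1) (hv : |v| ≤ 1)
    (hl0 : 0 ≤ l) (hl1 : l ≤ 1)
    (hbd : (d:ℝ)⁻¹ * Real.exp (l*u) + (1-(d:ℝ)⁻¹) * Real.exp (l*v)
      ≤ Real.exp ((d:ℝ)⁻¹*(1-(d:ℝ)⁻¹)*(l^2/2 + l^3))) :
    (μ {ω | t ≤ ∑ i ∈ Finset.range N, (if D i ω = k then u else v)}).toReal
      ≤ Real.exp (-l*t + N * ((d:ℝ)⁻¹*(1-(d:ℝ)⁻¹)*(l^2/2 + l^3))) := by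
  set Y : ℕ → Ω → ℝ := fun i ω => if D i ω = k then u else v with hY
  have hYmeas : ∀ i, Measurable (Y i) := by
    intro i
    exact Measurable.ite ((hmeas i) (measurableSet_singleton k)) measurable_const
      measurable_const
  have hYindep : iIndepFun Y μ := by
    have := hindep.comp (fun _ δ => if δ = k then u else v)
      (fun i => measurable_of_countable _)
    exact this
  set T : Ω → ℝ := ∑ i ∈ Finset.range N, Y i with hT
  have hTapp : ∀ ω, T ω = ∑ i ∈ Finset.range N, (if D i ω = k then u else v) := by
    intro ω; rw [hT, Finset.sum_apply]
  have hTmeas : Measurable T := by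
    have : Measurable fun ω => ∑ i ∈ Finset.range N, Y i ω :=
      Finset.measurable_sum _ (fun i _ => hYmeas i)
    convert this using 1
    funext ω; rw [hTapp, hY]
  have hTbd : ∀ ω, |T ω| ≤ N := by
    intro ω
    rw [hTapp]
    calc |∑ i ∈ Finset.range N, (if D i ω = k then u else v)|
        ≤ ∑ i ∈ Finset.range N, |if D i ω = k then u else v| := Finset.abs_sum_le_sum_abs _ _
    _ ≤ ∑ _i ∈ Finset.range N, (1:ℝ) := by
        apply Finset.sum_le_sum; intro i _; split_ifs <;> assumption
    _ = N := by simp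
  have hint : Integrable (fun ω => Real.exp (l * T ω)) μ := by
    apply Integrable.mono' (integrable_const (Real.exp (l * N)))
      ((hTmeas.const_mul l).exp.aestronglyMeasurable)
    apply ae_of_all
    intro ω
    rw [Real.norm_eq_abs, Real.abs_exp]
    apply Real.exp_le_exp.2
    have : T ω ≤ N := le_trans (le_abs_self _) (hTbd ω)
    exact mul_le_mul_of_nonneg_left this hl0
  have hset : {ω | t ≤ ∑ i ∈ Finset.range N, (if D i ω = k then u else v)}
      = {ω | t ≤ T ω} := by
    ext ω; rw [Set.mem_setOf_eq, Set.mem_setOf_eq, hTapp]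
  rw [hset]
  calc (μ {ω | t ≤ T ω}).toReal ≤ Real.exp (-l*t) * mgf T μ l :=
        measure_ge_le_exp_mul_mgf t hl0 hint
  _ = Real.exp (-l*t) * ∏ i ∈ Finset.range N, mgf (Y i) μ l := by
      rw [hT, hYindep.mgf_sum hYmeas]
  _ ≤ Real.exp (-l*t) * Real.exp ((d:ℝ)⁻¹*(1-(d:ℝ)⁻¹)*(l^2/2 + l^3)) ^ N := by
      apply mul_le_mul_of_nonneg_left _ (Real.exp_nonneg _)
      calc ∏ i ∈ Finset.range N, mgf (Y i) μ l
          ≤ ∏ _i ∈ Finset.range N, Real.exp ((d:ℝ)⁻¹*(1-(d:ℝ)⁻¹)*(l^2/2 + l^3)) := by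
            apply Finset.prod_le_prod (fun i _ => mgf_nonneg)
            intro i _
            rw [hY, mgf_ite hd hmeas hunif i k]
            exact hbd
      _ = Real.exp ((d:ℝ)⁻¹*(1-(d:ℝ)⁻¹)*(l^2/2 + l^3)) ^ N := by
            rw [Finset.prod_const, Finset.card_range]
  _ = Real.exp (-l*t + N * ((d:ℝ)⁻¹*(1-(d:ℝ)⁻¹)*(l^2/2 + l^3))) := by
      rw [← Real.exp_nat_mul, ← Real.exp_add]


lemma chernoff_up (hd : 2 ≤ d) (hmeas : ∀ i, Measurable (D i))
    (hindep : iIndepFun D μ)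
    (hunif : ∀ i k, μ {ω | D i ω = k} = (d : ℝ≥0∞)⁻¹)
    (k : Fin d) (N : ℕ) (hN1 : 1 ≤ N) (hl8 : lFun d N ≤ 1/8) :
    (μ {ω | tFun d N ≤ (∑ i ∈ Finset.range N, if D i ω = k then (1:ℝ) else 0)
        - N*(d:ℝ)⁻¹}).toReal ≤ (N:ℝ)^(-3/2 : ℝ) := by
  have hd0 : 0 < d := lt_of_lt_of_le (by norm_num) hd
  have hdR : (1:ℝ) < d := by exact_mod_cast lt_of_lt_of_le one_lt_two hd
  have hp0 : (0:ℝ) ≤ (d:ℝ)⁻¹ := by positivity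
  have hp1 : (d:ℝ)⁻¹ ≤ 1 := by
    rw [inv_le_one_iff₀]; right; linarith
  set p := (d:ℝ)⁻¹
  set l := lFun d N
  set t := tFun d N
  have hl0 : 0 ≤ l := lFun_nonneg d N hd hN1
  have hl1 : l ≤ 1 := le_trans hl8 (by norm_num)
  have hset : {ω | t ≤ (∑ i ∈ Finset.range N, if D i ω = k then (1:ℝ) else 0) - N*p}
      = {ω | t ≤ ∑ i ∈ Finset.range N, (if D i ω = k then (1-p) else -p)} := by
    ext ω
    have hterm : ∀ i, (if D i ω = k then (1-p) else -p)
        = (if D i ω = k then (1:ℝ) else 0) - p := by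
      intro i; split_ifs <;> ring
    simp only [Set.mem_setOf_eq]
    rw [show ∑ i ∈ Finset.range N, (if D i ω = k then (1-p) else -p)
        = ∑ i ∈ Finset.range N, ((if D i ω = k then (1:ℝ) else 0) - p) from
        Finset.sum_congr rfl (fun i _ => hterm i)]
    rw [Finset.sum_sub_distrib, Finset.sum_const, Finset.card_range, nsmul_eq_mul]
  have hbd : p * Real.exp (l*(1-p)) + (1-p) * Real.exp (l*(-p))
      ≤ Real.exp (p*(1-p)*(l^2/2 + l^3)) := by
    have hb := bern_bd hp0 hp1 (by rwa [abs_of_nonneg hl0])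
    rw [abs_of_nonneg hl0] at hb
    rw [show l*(-p) = -(l*p) by ring]
    exact hb
  have hu : |1-p| ≤ 1 := by rw [abs_le]; constructor <;> linarith
  have hv : |(-p)| ≤ 1 := by rw [abs_neg, abs_of_nonneg hp0]; linarith
  rw [hset]
  exact le_trans (chernoff_ite hd0 hmeas hindep hunif k N (1-p) (-p) l t hu hv hl0 hl1 hbd)
    (exponent_le d N hd hN1 hl8)

lemma chernoff_down (hd : 2 ≤ d) (hmeas : ∀ i, Measurable (D i))
    (hindep : iIndepFun D μ)
    (hunif : ∀ i k, μ {ω | D i ω = k} = (d : ℝ≥0∞)⁻¹)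
    (k : Fin d) (N : ℕ) (hN1 : 1 ≤ N) (hl8 : lFun d N ≤ 1/8) :
    (μ {ω | tFun d N ≤ N*(d:ℝ)⁻¹
        - (∑ i ∈ Finset.range N, if D i ω = k then (1:ℝ) else 0)}).toReal
      ≤ (N:ℝ)^(-3/2 : ℝ) := by
  have hd0 : 0 < d := lt_of_lt_of_le (by norm_num) hd
  have hdR : (1:ℝ) < d := by exact_mod_cast lt_of_lt_of_le one_lt_two hd
  have hp0 : (0:ℝ) ≤ (d:ℝ)⁻¹ := by positivity
  have hp1 : (d:ℝ)⁻¹ ≤ 1 := by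
    rw [inv_le_one_iff₀]; right; linarith
  set p := (d:ℝ)⁻¹
  set l := lFun d N
  set t := tFun d N
  have hl0 : 0 ≤ l := lFun_nonneg d N hd hN1
  have hl1 : l ≤ 1 := le_trans hl8 (by norm_num)
  have hset : {ω | t ≤ N*p - (∑ i ∈ Finset.range N, if D i ω = k then (1:ℝ) else 0)}
      = {ω | t ≤ ∑ i ∈ Finset.range N, (if D i ω = k then (p-1) else p)} := by
    ext ω
    have hterm : ∀ i, (if D i ω = k then (p-1) else p)
        = p - (if D i ω = k then (1:ℝ) else 0) := by
      intro i; split_ifs <;> ring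
    simp only [Set.mem_setOf_eq]
    rw [show ∑ i ∈ Finset.range N, (if D i ω = k then (p-1) else p)
        = ∑ i ∈ Finset.range N, (p - (if D i ω = k then (1:ℝ) else 0)) from
        Finset.sum_congr rfl (fun i _ => hterm i)]
    rw [Finset.sum_sub_distrib, Finset.sum_const, Finset.card_range, nsmul_eq_mul]
  have hbd : p * Real.exp (l*(p-1)) + (1-p) * Real.exp (l*p)
      ≤ Real.exp (p*(1-p)*(l^2/2 + l^3)) := by
    have habs : |(-l)| ≤ 1 := by rwa [abs_neg, abs_of_nonneg hl0]
    have hb := bern_bd hp0 hp1 habs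
    rw [abs_neg, abs_of_nonneg hl0, show (-l)*(1-p) = l*(p-1) by ring,
      show -((-l)*p) = l*p by ring, neg_pow, show ((-1:ℝ))^2 = 1 by norm_num, one_mul] at hb
    exact hb
  have hu : |p-1| ≤ 1 := by rw [abs_le]; constructor <;> linarith
  have hv : |p| ≤ 1 := by rw [abs_of_nonneg hp0]; linarith
  rw [hset]
  exact le_trans (chernoff_ite hd0 hmeas hindep hunif k N (p-1) p l t hu hv hl0 hl1 hbd)
    (exponent_le d N hd hN1 hl8)


lemma dev_as (hd : 2 ≤ d) (hmeas : ∀ i, Measurable (D i))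
    (hindep : iIndepFun D μ)
    (hunif : ∀ i k, μ {ω | D i ω = k} = (d : ℝ≥0∞)⁻¹) :
    ∀ᵐ ω ∂μ, ∀ᶠ N in Filter.atTop, ∀ k : Fin d,
      |(∑ i ∈ Finset.range N, (if D i ω = k then (1:ℝ) else 0)) - N*(d:ℝ)⁻¹|
        ≤ tFun d N := by
  classical
  set N₀ := max 2 ((512*d^2)^2) with hN₀
  set s : ℕ → Set Ω := fun N => {ω | ¬ ∀ k : Fin d,
    |(∑ i ∈ Finset.range N, (if D i ω = k then (1:ℝ) else 0)) - N*(d:ℝ)⁻¹| ≤ tFun d N}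
    with hs
  have hbound : ∀ N, N₀ ≤ N →
      μ (s N) ≤ ENNReal.ofReal (2*d*(N:ℝ)^(-3/2 : ℝ)) := by
    intro N hN
    have hN1 : 1 ≤ N := le_trans (le_trans (by norm_num) (le_max_left 2 _)) hN
    have hl8 : lFun d N ≤ 1/8 := lFun_small d hd N hN
    have hsub : s N ⊆ ⋃ k : Fin d,
        ({ω | tFun d N ≤ (∑ i ∈ Finset.range N, if D i ω = k then (1:ℝ) else 0)
            - N*(d:ℝ)⁻¹} ∪
         {ω | tFun d N ≤ N*(d:ℝ)⁻¹
            - (∑ i ∈ Finset.range N, if D i ω = k then (1:ℝ) else 0)}) := by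
      intro ω hω
      rw [hs, Set.mem_setOf_eq] at hω
      push_neg at hω
      obtain ⟨k, hk⟩ := hω
      refine Set.mem_iUnion.2 ⟨k, ?_⟩
      rcases (lt_abs.mp hk) with h | h
      · left
        show tFun d N ≤ _
        linarith
      · right
        show tFun d N ≤ (N:ℝ)*(d:ℝ)⁻¹ - (∑ i ∈ Finset.range N, if D i ω = k then (1:ℝ) else 0)
        linarith
    have hmail : ∀ k : Fin d,
        μ ({ω | tFun d N ≤ (∑ i ∈ Finset.range N, if D i ω = k then (1:ℝ) else 0)
            - N*(d:ℝ)⁻¹} ∪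
         {ω | tFun d N ≤ N*(d:ℝ)⁻¹
            - (∑ i ∈ Finset.range N, if D i ω = k then (1:ℝ) else 0)})
          ≤ ENNReal.ofReal ((N:ℝ)^(-3/2:ℝ)) + ENNReal.ofReal ((N:ℝ)^(-3/2:ℝ)) := by
      intro k
      refine le_trans (measure_union_le _ _) (add_le_add ?_ ?_)
      · have h1 := chernoff_up hd hmeas hindep hunif k N hN1 hl8
        calc μ _ = ENNReal.ofReal ((μ _).toReal) := by
              rw [ENNReal.ofReal_toReal (measure_ne_top μ _)]
        _ ≤ _ := ENNReal.ofReal_le_ofReal h1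
      · have h1 := chernoff_down hd hmeas hindep hunif k N hN1 hl8
        calc μ _ = ENNReal.ofReal ((μ _).toReal) := by
              rw [ENNReal.ofReal_toReal (measure_ne_top μ _)]
        _ ≤ _ := ENNReal.ofReal_le_ofReal h1
    calc μ (s N) ≤ ∑ k : Fin d, μ _ := le_trans (measure_mono hsub) (measure_iUnion_fintype_le _ _)
    _ ≤ ∑ _k : Fin d, (ENNReal.ofReal ((N:ℝ)^(-3/2:ℝ)) + ENNReal.ofReal ((N:ℝ)^(-3/2:ℝ))) :=
        Finset.sum_le_sum (fun k _ => hmail k)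
    _ = ENNReal.ofReal (2*d*(N:ℝ)^(-3/2 : ℝ)) := by
        rw [Finset.sum_const, Finset.card_univ, Fintype.card_fin, nsmul_eq_mul]
        rw [show (2*(d:ℝ)*(N:ℝ)^(-3/2:ℝ)) = ((2*d:ℕ):ℝ)*((N:ℝ)^(-3/2:ℝ)) by push_cast; ring,
          ENNReal.ofReal_mul (by positivity), ENNReal.ofReal_natCast]
        push_cast
        ring
  set g : ℕ → ℝ := fun N => 2*(d:ℝ)*(N:ℝ)^(-3/2:ℝ) with hg
  set br : ℕ → ℝ := fun N => if N < N₀ then 1 else g N with hbr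
  have hgnn : ∀ N, 0 ≤ g N := by intro N; rw [hg]; positivity
  have hbrnn : ∀ N, 0 ≤ br N := by
    intro N; rw [hbr]; dsimp only; split_ifs
    · norm_num
    · exact hgnn N
  have hμbr : ∀ N, μ (s N) ≤ ENNReal.ofReal (br N) := by
    intro N
    rw [hbr]; dsimp only
    split_ifs with h
    · rw [ENNReal.ofReal_one]; exact prob_le_one
    · exact hbound N (le_of_not_gt h)
  have hgsum : Summable g := by
    rw [hg]
    exact (Real.summable_nat_rpow.2 (by norm_num)).mul_left _
  have hdiff : Summable (fun N => br N - g N) := by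
    apply summable_of_ne_finset_zero (s := Finset.range N₀)
    intro b hb
    have hb' : ¬ b < N₀ := fun h => hb (Finset.mem_range.2 h)
    rw [hbr]; dsimp only; rw [if_neg hb', sub_self]
  have hbrsum : Summable br := by
    have : (fun N => (br N - g N) + g N) = br := funext fun N => by ring
    exact this ▸ hdiff.add hgsum
  have htsum : ∑' N, μ (s N) ≠ ⊤ := by
    have hle : ∑' N, μ (s N) ≤ ENNReal.ofReal (∑' N, br N) := by
      calc ∑' N, μ (s N) ≤ ∑' N, ENNReal.ofReal (br N) := ENNReal.tsum_le_tsum hμbr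
      _ = ENNReal.ofReal (∑' N, br N) := (ENNReal.ofReal_tsum_of_nonneg hbrnn hbrsum).symm
    exact ne_top_of_le_ne_top ENNReal.ofReal_ne_top hle
  filter_upwards [MeasureTheory.ae_eventually_notMem htsum] with ω hω
  apply hω.mono
  intro N hN
  exact not_not.mp hN


end ProbAux

lemma cntK_cast {d : ℕ} (D : ℕ → Fin d) (k : Fin d) (N : ℕ) :
    ((cntK D k N : ℕ) : ℝ) = ∑ i ∈ Finset.range N, (if D i = k then (1:ℝ) else 0) := by
  unfold cntK
  rw [Finset.card_filter]
  push_cast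
  rfl

lemma half_pow (m : ℕ) : ((1:ℝ)/2)^m = (2:ℝ)^(-(m:ℝ)) := by
  rw [Real.rpow_neg (by norm_num), Real.rpow_natCast, one_div, inv_pow]

lemma det_main {d : ℕ} (hd : 2 ≤ d) (x : Euc d) (Dω : ℕ → Fin d) (Sω : ℕ → ℝ)
    (hS : ∀ i, Sω i = 1/2) (N : ℕ) (hN1 : 1 ≤ N)
    (hdev : ∀ k, |(∑ i ∈ Finset.range N, (if Dω i = k then (1:ℝ) else 0)) - N*(d:ℝ)⁻¹|
      ≤ tFun d N) :
    (Real.sqrt d * (2:ℝ)^(-(N:ℝ)/d - tFun d N) ≤ Metric.diam (treeCell d x Dω Sω N) ∧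
     Metric.diam (treeCell d x Dω Sω N) ≤ Real.sqrt d * (2:ℝ)^(-(N:ℝ)/d + tFun d N)) ∧
    ((2:ℝ)^(-(2*Real.sqrt (((d:ℝ)-1)*N*Real.log N))) ≤
        (Metric.diam (treeCell d x Dω Sω N) / Real.sqrt d)^d /
          (volume (treeCell d x Dω Sω N)).toReal ∧
     (Metric.diam (treeCell d x Dω Sω N) / Real.sqrt d)^d /
          (volume (treeCell d x Dω Sω N)).toReal ≤
        (2:ℝ)^(2*Real.sqrt (((d:ℝ)-1)*N*Real.log N))) := by
  have hdR2 : (2:ℝ) ≤ (d:ℝ) := by exact_mod_cast hd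
  have hdR0 : (0:ℝ) < d := by linarith
  have hNR : (1:ℝ) ≤ N := by exact_mod_cast hN1
  have hlog : 0 ≤ Real.log N := Real.log_nonneg hNR
  set a := (treeEndpoints d x Dω Sω N).1
  set b := (treeEndpoints d x Dω Sω N).2
  have hside : ∀ k, b k - a k = (1/2:ℝ)^(cntK Dω k N) := side_eq x Dω Sω hS N
  have hab : ∀ k, a k ≤ b k := by
    intro k
    have := hside k
    nlinarith [pow_pos (by norm_num : (0:ℝ) < 1/2) (cntK Dω k N)]
  set t := tFun d N with htdef
  set elo : ℝ := -(N:ℝ)/d - t with helo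
  set ehi : ℝ := -(N:ℝ)/d + t with hehi
  -- bounds on each side
  have hsidebd : ∀ k, (2:ℝ)^elo ≤ b k - a k ∧ b k - a k ≤ (2:ℝ)^ehi := by
    intro k
    rw [hside k, half_pow]
    have hdevk := hdev k
    rw [← cntK_cast Dω k N] at hdevk
    rw [abs_le] at hdevk
    have hNp : (N:ℝ)*(d:ℝ)⁻¹ = (N:ℝ)/d := by rw [div_eq_mul_inv]
    rw [hNp] at hdevk
    constructor
    · rw [Real.rpow_le_rpow_left_iff (by norm_num : (1:ℝ) < 2)]
      rw [helo, neg_div]; linarith [hdevk.2]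
    · rw [Real.rpow_le_rpow_left_iff (by norm_num : (1:ℝ) < 2)]
      rw [hehi, neg_div]; linarith [hdevk.1]
  have hlo0 : (0:ℝ) < (2:ℝ)^elo := Real.rpow_pos_of_pos (by norm_num) _
  have hhi0 : (0:ℝ) < (2:ℝ)^ehi := Real.rpow_pos_of_pos (by norm_num) _
  -- diameter
  have hdiam : Metric.diam (treeCell d x Dω Sω N) = Real.sqrt (∑ k, (b k - a k)^2) :=
    diam_box a b hab
  have hd1 : Real.sqrt d * (2:ℝ)^elo ≤ Metric.diam (treeCell d x Dω Sω N) := by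
    rw [hdiam]
    have h1 : (d:ℝ) * ((2:ℝ)^elo)^2 ≤ ∑ k, (b k - a k)^2 := by
      calc (d:ℝ) * ((2:ℝ)^elo)^2 = ∑ _k : Fin d, ((2:ℝ)^elo)^2 := by
            rw [Finset.sum_const, Finset.card_univ, Fintype.card_fin, nsmul_eq_mul]
      _ ≤ ∑ k, (b k - a k)^2 := by
            apply Finset.sum_le_sum
            intro k _
            exact pow_le_pow_left₀ (le_of_lt hlo0) (hsidebd k).1 2
    calc Real.sqrt d * (2:ℝ)^elo = Real.sqrt ((d:ℝ) * ((2:ℝ)^elo)^2) := by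
          rw [Real.sqrt_mul (le_of_lt hdR0), Real.sqrt_sq (le_of_lt hlo0)]
    _ ≤ Real.sqrt (∑ k, (b k - a k)^2) := Real.sqrt_le_sqrt h1
  have hd2 : Metric.diam (treeCell d x Dω Sω N) ≤ Real.sqrt d * (2:ℝ)^ehi := by
    rw [hdiam]
    have h1 : ∑ k, (b k - a k)^2 ≤ (d:ℝ) * ((2:ℝ)^ehi)^2 := by
      calc ∑ k, (b k - a k)^2 ≤ ∑ _k : Fin d, ((2:ℝ)^ehi)^2 := by
            apply Finset.sum_le_sum
            intro k _
            have := (hsidebd k).2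
            have h0 : 0 ≤ b k - a k := by linarith [(hsidebd k).1, hlo0]
            exact pow_le_pow_left₀ h0 this 2
      _ = (d:ℝ) * ((2:ℝ)^ehi)^2 := by
            rw [Finset.sum_const, Finset.card_univ, Fintype.card_fin, nsmul_eq_mul]
    calc Real.sqrt (∑ k, (b k - a k)^2) ≤ Real.sqrt ((d:ℝ) * ((2:ℝ)^ehi)^2) :=
          Real.sqrt_le_sqrt h1
    _ = Real.sqrt d * (2:ℝ)^ehi := by
          rw [Real.sqrt_mul (le_of_lt hdR0), Real.sqrt_sq (le_of_lt hhi0)]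
  refine ⟨⟨hd1, hd2⟩, ?_⟩
  -- volume
  have hvol : (volume (treeCell d x Dω Sω N)).toReal = (2:ℝ)^(-(N:ℝ)) := by
    have : volume (treeCell d x Dω Sω N) = ENNReal.ofReal (((1:ℝ)/2)^N) := by
      rw [show treeCell d x Dω Sω N = box a b from rfl, volume_box]
      rw [← ENNReal.ofReal_prod_of_nonneg (fun k _ => by
        rw [hside k]; positivity)]
      congr 1
      calc ∏ k, (b k - a k) = ∏ k, ((1:ℝ)/2)^(cntK Dω k N) :=
            Finset.prod_congr rfl (fun k _ => hside k)
      _ = ((1:ℝ)/2)^(∑ k, cntK Dω k N) := Finset.prod_pow_eq_pow_sum _ _ _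
      _ = ((1:ℝ)/2)^N := by rw [cntK_sum Dω N]
    rw [this, ENNReal.toReal_ofReal (by positivity), half_pow]
  have hvolpos : (0:ℝ) < (volume (treeCell d x Dω Sω N)).toReal := by
    rw [hvol]; exact Real.rpow_pos_of_pos (by norm_num) _
  -- ratio
  set r := Metric.diam (treeCell d x Dω Sω N) / Real.sqrt d with hr
  have hsd : (0:ℝ) < Real.sqrt d := Real.sqrt_pos.2 hdR0
  have hrlo : (2:ℝ)^elo ≤ r := by
    rw [hr, le_div_iff₀ hsd]
    calc (2:ℝ)^elo * Real.sqrt d = Real.sqrt d * (2:ℝ)^elo := by ring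
    _ ≤ _ := hd1
  have hrhi : r ≤ (2:ℝ)^ehi := by
    rw [hr, div_le_iff₀ hsd]
    calc Metric.diam (treeCell d x Dω Sω N) ≤ Real.sqrt d * (2:ℝ)^ehi := hd2
    _ = (2:ℝ)^ehi * Real.sqrt d := by ring
  have hr0 : 0 ≤ r := le_trans (le_of_lt hlo0) hrlo
  have hrpowlo : (2:ℝ)^(elo*d) ≤ r^d := by
    calc (2:ℝ)^(elo*d) = ((2:ℝ)^elo)^d := by
          rw [← Real.rpow_natCast ((2:ℝ)^elo) d, ← Real.rpow_mul (by norm_num : (0:ℝ) ≤ 2)]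
    _ ≤ r^d := pow_le_pow_left₀ (le_of_lt hlo0) hrlo d
  have hrpowhi : r^d ≤ (2:ℝ)^(ehi*d) := by
    calc r^d ≤ ((2:ℝ)^ehi)^d := pow_le_pow_left₀ hr0 hrhi d
    _ = (2:ℝ)^(ehi*d) := by
          rw [← Real.rpow_natCast ((2:ℝ)^ehi) d, ← Real.rpow_mul (by norm_num : (0:ℝ) ≤ 2)]
  -- t*d = 2*sqrt((d-1) N log N)
  have htd : t * d = 2*Real.sqrt (((d:ℝ)-1)*N*Real.log N) := by
    rw [htdef]
    unfold tFun
    rw [Real.sqrt_div (mul_nonneg (mul_nonneg (by linarith) (by linarith)) hlog :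
      (0:ℝ) ≤ ((d:ℝ)-1)*N*Real.log N),
      Real.sqrt_sq (le_of_lt hdR0)]
    field_simp
  have helod : elo * d = -(N:ℝ) - 2*Real.sqrt (((d:ℝ)-1)*N*Real.log N) := by
    rw [helo]
    rw [sub_mul, neg_div, neg_mul, div_mul_cancel₀ _ (ne_of_gt hdR0), htd]
  have hehid : ehi * d = -(N:ℝ) + 2*Real.sqrt (((d:ℝ)-1)*N*Real.log N) := by
    rw [hehi]
    rw [add_mul, neg_div, neg_mul, div_mul_cancel₀ _ (ne_of_gt hdR0), htd]
  constructor
  · rw [le_div_iff₀ hvolpos, hvol, ← Real.rpow_add (by norm_num : (0:ℝ) < 2)]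
    rw [show -(2*Real.sqrt (((d:ℝ)-1)*N*Real.log N)) + -(N:ℝ)
        = elo * d from by rw [helod]; ring]
    exact hrpowlo
  · rw [div_le_iff₀ hvolpos, hvol, ← Real.rpow_add (by norm_num : (0:ℝ) < 2)]
    rw [show 2*Real.sqrt (((d:ℝ)-1)*N*Real.log N) + -(N:ℝ)
        = ehi * d from by rw [hehid]; ring]
    exact hrpowhi

/-- almost sure asymptotic bounds for centered random tree cells
(Corollary `cor22`). -/
theorem statement16 {d : ℕ} (hd : 2 ≤ d)
    {Ω : Type*} [MeasurableSpace Ω] {μ : Measure Ω} [IsProbabilityMeasure μ]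
    (x : Euc d) (hx : ∀ j, x j ∈ Set.Icc (0:ℝ) 1)
    (D : ℕ → Ω → Fin d) (S : ℕ → Ω → ℝ)
    (hsplit : CenteredSplits μ d D S) :
    ∀ᵐ ω ∂μ,
      (∃ n0 : ℕ, 1 ≤ n0 ∧ ∀ N : ℕ, n0 ≤ N →
        Real.sqrt d * (2 : ℝ) ^
            (-(N : ℝ) / d - 2 * Real.sqrt (((d : ℝ) - 1) * N * Real.log N / (d : ℝ) ^ 2)) ≤
          Metric.diam (treeCell d x (fun i => D i ω) (fun i => S i ω) N) ∧
        Metric.diam (treeCell d x (fun i => D i ω) (fun i => S i ω) N) ≤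
          Real.sqrt d * (2 : ℝ) ^
            (-(N : ℝ) / d + 2 * Real.sqrt (((d : ℝ) - 1) * N * Real.log N / (d : ℝ) ^ 2)))
      ∧ (∃ n1 : ℕ, ∀ N : ℕ, n1 ≤ N →
        (2 : ℝ) ^ (-(2 * Real.sqrt (((d : ℝ) - 1) * N * Real.log N))) ≤
          (Metric.diam (treeCell d x (fun i => D i ω) (fun i => S i ω) N) / Real.sqrt d) ^ d /
            (volume (treeCell d x (fun i => D i ω) (fun i => S i ω) N)).toReal ∧
        (Metric.diam (treeCell d x (fun i => D i ω) (fun i => S i ω) N) / Real.sqrt d) ^ d /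
            (volume (treeCell d x (fun i => D i ω) (fun i => S i ω) N)).toReal ≤
          (2 : ℝ) ^ (2 * Real.sqrt (((d : ℝ) - 1) * N * Real.log N))) := by
  obtain ⟨hDmeas, hDindep, hDunif, hS⟩ := hsplit
  have hae1 : ∀ᵐ ω ∂μ, ∀ i, S i ω = 1/2 := (MeasureTheory.ae_all_iff).2 hS
  have hae2 := dev_as hd hDmeas hDindep hDunif
  filter_upwards [hae1, hae2] with ω hSω hdevω
  obtain ⟨M, hM⟩ := Filter.eventually_atTop.1 hdevω
  have key := fun (N : ℕ) (hN : max M 1 ≤ N) =>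
    det_main hd x (fun i => D i ω) (fun i => S i ω) hSω N
      (le_trans (le_max_right M 1) hN) (hM N (le_trans (le_max_left M 1) hN))
  constructor
  · exact ⟨max M 1, le_max_right M 1, fun N hN => (key N hN).1⟩
  · exact ⟨max M 1, fun N hN => (key N hN).2⟩

end
end

section
/- Shape regularity of Mondrian-type cells via Gamma side lengths: let λ > 0, let X_1,…,X_d be i.i.d. random variables with Gamma(2,λ) distribution (density t ↦ λ² t e^{−λt} on (0,∞)), and set h_− = min(X_1,…,X_d), h_+ = max(X_1,…,X_d). Then for every δ with 0 < δ ≤ 1 − (1 − e^{−1})^d, with probability at least 1−2δ: h_+/h_− ≤ 5d log(δ/d)/log(1−δ). -/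
open MeasureTheory ProbabilityTheory Real Set
open scoped ENNReal Classical

noncomputable section

section AuxMondrian
open Filter

lemma exp_neg_le_quad {a : ℝ} (ha : 0 ≤ a) : Real.exp (-a) ≤ 1 - a + a ^ 2 / 2 := by
  have h3 : 1 + a + a ^ 2 / 2 ≤ Real.exp a := Real.quadratic_le_exp_of_nonneg ha
  have hea : 0 < Real.exp a := Real.exp_pos a
  rw [Real.exp_neg, inv_eq_one_div, div_le_iff₀ hea]
  nlinarith [sq_nonneg a, sq_nonneg (a ^ 2), sq_nonneg (a - 1),
    mul_le_mul_of_nonneg_left h3 (show (0:ℝ) ≤ 1 - a + a ^ 2 / 2 by nlinarith [sq_nonneg (a - 1)])]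

lemma gamma_two_tail {lam : ℝ} (hlam : 0 < lam) {w : ℝ} (hw : 0 ≤ w) :
    ProbabilityTheory.gammaMeasure 2 lam (Set.Ici w)
      = ENNReal.ofReal (Real.exp (-(lam * w)) * (1 + lam * w)) := by
  have hderiv : ∀ x ∈ Set.Ici w,
      HasDerivAt (fun y : ℝ => -(Real.exp (-(lam * y)) * (1 + lam * y)))
        ((fun x : ℝ => lam ^ 2 * x * Real.exp (-(lam * x))) x) x := by
    intro x _
    have h0 : HasDerivAt (fun y : ℝ => -(lam * y)) (-lam) x := by
      simpa using ((hasDerivAt_id x).const_mul lam).fun_neg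
    have h2 : HasDerivAt (fun y : ℝ => 1 + lam * y) lam x := by
      simpa using ((hasDerivAt_id x).const_mul lam).const_add 1
    have h := (h0.exp.fun_mul h2).fun_neg
    exact h.congr_deriv (by ring)
  have hpos : ∀ x ∈ Set.Ioi w, 0 ≤ lam ^ 2 * x * Real.exp (-(lam * x)) := by
    intro x hx
    have hx0 : (0:ℝ) ≤ x := hw.trans (le_of_lt hx)
    positivity
  have htend : Tendsto (fun y : ℝ => -(Real.exp (-(lam * y)) * (1 + lam * y)))
      atTop (nhds 0) := by
    have hA : Tendsto (fun y : ℝ => lam * y) atTop atTop :=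
      Tendsto.const_mul_atTop hlam tendsto_id
    have h1 := Real.tendsto_exp_neg_atTop_nhds_zero
    have h2 := Real.tendsto_pow_mul_exp_neg_atTop_nhds_zero 1
    have h4 := (h1.add h2).neg
    simp only [add_zero, neg_zero] at h4
    have h3 : Tendsto (fun z : ℝ => -(Real.exp (-z) * (1 + z))) atTop (nhds 0) :=
      h4.congr (fun z => by ring)
    exact h3.comp hA
  have hint := integral_Ioi_of_hasDerivAt_of_nonneg' hderiv hpos htend
  have hIntOn : MeasureTheory.IntegrableOn (fun x : ℝ => lam ^ 2 * x * Real.exp (-(lam * x)))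
      (Set.Ioi w) := integrableOn_Ioi_deriv_of_nonneg' hderiv hpos htend
  have hpdf : ∀ᵐ x ∂(volume : Measure ℝ), x ∈ Set.Ioi w → ProbabilityTheory.gammaPDF 2 lam x
      = ENNReal.ofReal (lam ^ 2 * x * Real.exp (-(lam * x))) := by
    refine MeasureTheory.ae_of_all _ (fun x hx => ?_)
    have hx0 : (0:ℝ) ≤ x := hw.trans (le_of_lt hx)
    rw [ProbabilityTheory.gammaPDF_of_nonneg hx0, Real.Gamma_two,
      show ((2:ℝ) - 1) = 1 by norm_num, Real.rpow_one, Real.rpow_two]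
    norm_num
  calc ProbabilityTheory.gammaMeasure 2 lam (Set.Ici w)
      = ∫⁻ x in Set.Ici w, ProbabilityTheory.gammaPDF 2 lam x := by
        rw [ProbabilityTheory.gammaMeasure, MeasureTheory.withDensity_apply _ measurableSet_Ici]
    _ = ∫⁻ x in Set.Ioi w, ProbabilityTheory.gammaPDF 2 lam x :=
        (MeasureTheory.setLIntegral_congr (MeasureTheory.Ioi_ae_eq_Ici)).symm
    _ = ∫⁻ x in Set.Ioi w, ENNReal.ofReal (lam ^ 2 * x * Real.exp (-(lam * x))) :=
        MeasureTheory.setLIntegral_congr_fun_ae measurableSet_Ioi hpdf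
    _ = ENNReal.ofReal (∫ x in Set.Ioi w, lam ^ 2 * x * Real.exp (-(lam * x))) :=
        (MeasureTheory.ofReal_integral_eq_lintegral_ofReal hIntOn
          ((ae_restrict_iff' measurableSet_Ioi).mpr (MeasureTheory.ae_of_all _ hpos))).symm
    _ = ENNReal.ofReal (Real.exp (-(lam * w)) * (1 + lam * w)) := by
        rw [hint]; norm_num

end AuxMondrian

set_option maxHeartbeats 1000000 in
/-- shape regularity of Mondrian-type cells via Gamma side lengths
(Proposition `mondrian`). -/
theorem statement19 {d : ℕ} (hd : 1 ≤ d) {lam : ℝ} (hlam : 0 < lam)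
    {Ω : Type*} [MeasurableSpace Ω] {μ : Measure Ω} [IsProbabilityMeasure μ]
    (Xv : Fin d → Ω → ℝ) (hmeas : ∀ i, Measurable (Xv i))
    (hindep : iIndepFun Xv μ)
    (hgamma : ∀ i, Measure.map (Xv i) μ = gammaMeasure 2 lam)
    {δ : ℝ} (hδ0 : 0 < δ) (hδ1 : δ ≤ 1 - (1 - Real.exp (-1)) ^ d) :
    ENNReal.ofReal (1 - 2 * δ) ≤
      μ {ω | (⨆ i, Xv i ω) / (⨅ i, Xv i ω) ≤
        5 * d * Real.log (δ / d) / Real.log (1 - δ)} := by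
  classical
  have hdpos : 0 < d := hd
  have hdR : (0:ℝ) < d := by exact_mod_cast hdpos
  haveI : Nonempty (Fin d) := ⟨⟨0, hdpos⟩⟩
  have hbase : (0:ℝ) < 1 - Real.exp (-1) := by
    have : Real.exp (-1) < 1 := Real.exp_lt_one_iff.mpr (by norm_num)
    linarith
  have hδlt1 : δ < 1 := by
    have : (0:ℝ) < (1 - Real.exp (-1)) ^ d := pow_pos hbase d
    linarith
  have h1δ : (0:ℝ) < 1 - δ := by linarith
  have h2e : (2:ℝ) ≤ Real.exp 1 := by
    have := Real.add_one_le_exp 1; linarith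
  have hexphalf : Real.exp (-1) ≤ 1/2 := by
    rw [Real.exp_neg, inv_eq_one_div, div_le_div_iff₀ (Real.exp_pos 1) (by norm_num : (0:ℝ) < 2)]
    linarith
  have hexp1 : Real.exp (-1) ≤ 1 - Real.exp (-1) := by linarith
  -- lower bound on 1 - δ
  have hlogδ : Real.exp (-(d:ℝ)) ≤ 1 - δ := by
    have h1 : Real.exp (-1) ^ d ≤ (1 - Real.exp (-1)) ^ d :=
      pow_le_pow_left₀ (Real.exp_pos _).le hexp1 d
    have h2 : Real.exp (-(d:ℝ)) = Real.exp (-1) ^ d := by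
      rw [← Real.exp_nat_mul]; ring_nf
    rw [h2]
    linarith
  -- a
  set a : ℝ := -Real.log (1 - δ) / d with ha_def
  have hlogneg : Real.log (1 - δ) < 0 := Real.log_neg h1δ (by linarith)
  have ha_pos : 0 < a := div_pos (by linarith) hdR
  have had : a * d = -Real.log (1 - δ) := by
    rw [ha_def]; field_simp
  have ha1 : a ≤ 1 := by
    have hlow : -(d:ℝ) ≤ Real.log (1 - δ) := (Real.le_log_iff_exp_le h1δ).mpr hlogδ
    rw [ha_def, div_le_one hdR]; linarith
  have hexpa : Real.exp (-a) ^ d = 1 - δ := by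
    rw [← Real.exp_nat_mul, show (d:ℝ) * (-a) = -(a * d) by ring, had, neg_neg,
      Real.exp_log h1δ]
  -- r
  have hdδ : (0:ℝ) < d / δ := div_pos hdR hδ0
  set r : ℝ := Real.log (d / δ) with hr_def
  have hδd : δ * Real.exp 1 ≤ d := by
    have hb : 1 + (d:ℝ) * (-Real.exp (-1)) ≤ (1 + (-Real.exp (-1))) ^ d :=
      one_add_mul_le_pow (by nlinarith [Real.exp_pos (-1)]) d
    have hb' : 1 - (d:ℝ) * Real.exp (-1) ≤ (1 - Real.exp (-1)) ^ d := by
      rw [show (1:ℝ) - Real.exp (-1) = 1 + (-Real.exp (-1)) by ring]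
      linarith [hb]
    have hδle : δ ≤ (d:ℝ) * Real.exp (-1) := by linarith
    have hee : Real.exp (-1) * Real.exp 1 = 1 := by
      rw [← Real.exp_add]; norm_num
    calc δ * Real.exp 1 ≤ (d:ℝ) * Real.exp (-1) * Real.exp 1 :=
          mul_le_mul_of_nonneg_right hδle (Real.exp_pos 1).le
      _ = d := by rw [mul_assoc, hee, mul_one]
  have hr1 : 1 ≤ r := by
    rw [hr_def, Real.le_log_iff_exp_le hdδ, le_div_iff₀ hδ0]
    linarith [hδd]
  have hr0 : (0:ℝ) < r := lt_of_lt_of_le one_pos hr1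
  have hlogδd : Real.log (δ / d) = -r := by
    rw [hr_def, show δ / d = (d / δ)⁻¹ by rw [inv_div], Real.log_inv]
  have hexpr : Real.exp (-r) = δ / d := by
    rw [hr_def, Real.exp_neg, Real.exp_log hdδ, inv_div]
  -- s
  have hea1 : Real.exp (-a) < 1 := Real.exp_lt_one_iff.mpr (by linarith)
  set s : ℝ := Real.sqrt (1 - Real.exp (-a)) with hs_def
  have hs2 : s ^ 2 = 1 - Real.exp (-a) := Real.sq_sqrt (by linarith)
  have hs0 : 0 < s := Real.sqrt_pos.mpr (by linarith)
  -- u, v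
  set u : ℝ := s / lam with hu_def
  set v : ℝ := 3 * r / lam with hv_def
  have hu : 0 < u := div_pos hs0 hlam
  have hv : 0 < v := div_pos (by linarith) hlam
  have hlu : lam * u = s := by rw [hu_def]; field_simp
  have hlv : lam * v = 3 * r := by rw [hv_def]; field_simp
  -- tails
  have htailu : ∀ i, μ ((Xv i) ⁻¹' (Set.Ici u)) = ENNReal.ofReal (Real.exp (-s) * (1 + s)) := by
    intro i
    rw [← Measure.map_apply (hmeas i) measurableSet_Ici, hgamma i, gamma_two_tail hlam hu.le, hlu]
  have hnn : (0:ℝ) ≤ Real.exp (-s) * (1 + s) := by positivity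
  have hprod : μ (⋂ i, (Xv i) ⁻¹' (Set.Ici u))
      = ENNReal.ofReal ((Real.exp (-s) * (1 + s)) ^ d) := by
    rw [hindep.meas_iInter (fun i => ⟨Set.Ici u, measurableSet_Ici, rfl⟩)]
    simp only [htailu]
    rw [Finset.prod_const, Finset.card_univ, Fintype.card_fin, ENNReal.ofReal_pow hnn]
  have hlow : 1 - δ ≤ (Real.exp (-s) * (1 + s)) ^ d := by
    have hadd : -s + 1 ≤ Real.exp (-s) := Real.add_one_le_exp (-s)
    have h1 : Real.exp (-a) ≤ Real.exp (-s) * (1 + s) := by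
      nlinarith [mul_le_mul_of_nonneg_right hadd (by linarith : (0:ℝ) ≤ 1 + s), hs2]
    rw [← hexpa]
    exact pow_le_pow_left₀ (Real.exp_pos _).le h1 d
  have htailv : ∀ i, μ ((Xv i) ⁻¹' (Set.Ioi v)) ≤ ENNReal.ofReal (δ / d) := by
    intro i
    refine (measure_mono (Set.preimage_mono Set.Ioi_subset_Ici_self)).trans ?_
    rw [← Measure.map_apply (hmeas i) measurableSet_Ici, hgamma i, gamma_two_tail hlam hv.le, hlv]
    refine ENNReal.ofReal_le_ofReal ?_
    have h2 : Real.exp (2 * r) = Real.exp r * Real.exp r := by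
      rw [two_mul, Real.exp_add]
    have key : 1 + 3 * r ≤ Real.exp (2 * r) := by
      have h := Real.add_one_le_exp r
      rw [h2]
      have hsq : (r + 1) * (r + 1) ≤ Real.exp r * Real.exp r :=
        mul_le_mul h h (by linarith) (Real.exp_pos r).le
      nlinarith [hsq, hr1]
    calc Real.exp (-(3 * r)) * (1 + 3 * r)
        ≤ Real.exp (-(3 * r)) * Real.exp (2 * r) :=
          mul_le_mul_of_nonneg_left key (Real.exp_pos _).le
      _ = Real.exp (-r) := by rw [← Real.exp_add]; ring_nf
      _ = δ / d := hexpr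
  -- events
  set A : Set Ω := ⋂ i, (Xv i) ⁻¹' (Set.Ici u) with hA_def
  set B : Set Ω := ⋃ i, (Xv i) ⁻¹' (Set.Ioi v) with hB_def
  have hAmeas : MeasurableSet A := MeasurableSet.iInter fun i => (hmeas i) measurableSet_Ici
  have hBmeas : MeasurableSet B := MeasurableSet.iUnion fun i => (hmeas i) measurableSet_Ioi
  have hμA : ENNReal.ofReal (1 - δ) ≤ μ A := by
    rw [hA_def, hprod]; exact ENNReal.ofReal_le_ofReal hlow
  have hμB : μ B ≤ ENNReal.ofReal δ := by
    refine (measure_iUnion_fintype_le _ _).trans ?_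
    calc ∑ i, μ ((Xv i) ⁻¹' (Set.Ioi v)) ≤ ∑ _i : Fin d, ENNReal.ofReal (δ / d) :=
          Finset.sum_le_sum (fun i _ => htailv i)
      _ = d • ENNReal.ofReal (δ / d) := by rw [Finset.sum_const, Finset.card_univ, Fintype.card_fin]
      _ = ENNReal.ofReal δ := by
          rw [nsmul_eq_mul, ← ENNReal.ofReal_natCast d, ← ENNReal.ofReal_mul (by positivity)]
          congr 1
          field_simp
  set G : Set Ω := A ∩ Bᶜ with hG_def
  have hGmeas : MeasurableSet G := hAmeas.inter hBmeas.compl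
  -- G is contained in the target
  have hGsub : G ⊆ {ω | (⨆ i, Xv i ω) / (⨅ i, Xv i ω) ≤
      5 * d * Real.log (δ / d) / Real.log (1 - δ)} := by
    rintro ω ⟨hωA, hωB⟩
    have hge : ∀ i, u ≤ Xv i ω := by
      intro i
      have := Set.mem_iInter.mp hωA i
      exact this
    have hle : ∀ i, Xv i ω ≤ v := by
      intro i
      by_contra h
      exact hωB (Set.mem_iUnion.mpr ⟨i, by simpa using lt_of_not_ge h⟩)
    have hsup : (⨆ i, Xv i ω) ≤ v := ciSup_le hle
    have hinf : u ≤ (⨅ i, Xv i ω) := le_ciInf hge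
    have h1 : (⨆ i, Xv i ω) / (⨅ i, Xv i ω) ≤ v / u := div_le_div₀ hv.le hsup hu hinf
    have hrhs : 5 * (d:ℝ) * Real.log (δ / d) / Real.log (1 - δ) = 5 * r / a := by
      have hl1 : Real.log (1 - δ) = -(a * d) := by rw [had]; ring
      rw [hlogδd, hl1]
      field_simp
    have hvu : v / u = 3 * r / s := by
      rw [hu_def, hv_def]
      field_simp
    have h3a5s : 3 * a ≤ 5 * s := by
      have hq := exp_neg_le_quad ha_pos.le
      nlinarith [hs2, hq, ha1, ha_pos.le, hs0.le]
    have h2 : v / u ≤ 5 * r / a := by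
      rw [hvu, div_le_div_iff₀ hs0 ha_pos]
      nlinarith [hr0.le, h3a5s]
    show (⨆ i, Xv i ω) / (⨅ i, Xv i ω) ≤ 5 * d * Real.log (δ / d) / Real.log (1 - δ)
    rw [hrhs]
    exact h1.trans h2
  -- measure of G
  have hGc : μ Gᶜ ≤ ENNReal.ofReal (2 * δ) := by
    have hGceq : Gᶜ = Aᶜ ∪ B := by rw [hG_def, Set.compl_inter, compl_compl]
    rw [hGceq]
    refine (measure_union_le _ _).trans ?_
    have hAc : μ Aᶜ ≤ ENNReal.ofReal δ := by
      rw [prob_compl_eq_one_sub hAmeas]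
      have h1 : (1:ℝ≥0∞) = ENNReal.ofReal (1 - δ) + ENNReal.ofReal δ := by
        rw [← ENNReal.ofReal_add (by linarith) hδ0.le]
        norm_num
      calc (1:ℝ≥0∞) - μ A ≤ 1 - ENNReal.ofReal (1 - δ) := tsub_le_tsub_left hμA _
        _ = ENNReal.ofReal δ := by
            rw [h1, ENNReal.add_sub_cancel_left ENNReal.ofReal_ne_top]
    calc μ Aᶜ + μ B ≤ ENNReal.ofReal δ + ENNReal.ofReal δ := add_le_add hAc hμB
      _ = ENNReal.ofReal (2 * δ) := by
          rw [← ENNReal.ofReal_add hδ0.le hδ0.le]; congr 1; ring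
  have hμG : ENNReal.ofReal (1 - 2 * δ) ≤ μ G := by
    by_cases hcase : 1 - 2 * δ ≤ 0
    · rw [ENNReal.ofReal_eq_zero.mpr hcase]
      exact zero_le'
    push_neg at hcase
    have hsum : μ G + μ Gᶜ = 1 := by
      rw [measure_add_measure_compl hGmeas, measure_univ]
    have hstep : (1:ℝ≥0∞) ≤ μ G + ENNReal.ofReal (2 * δ) := by
      calc (1:ℝ≥0∞) = μ G + μ Gᶜ := hsum.symm
        _ ≤ μ G + ENNReal.ofReal (2 * δ) := add_le_add_right hGc _
    have h2 : ENNReal.ofReal (1 - 2 * δ) + ENNReal.ofReal (2 * δ)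
        ≤ μ G + ENNReal.ofReal (2 * δ) := by
      rw [← ENNReal.ofReal_add (by linarith) (by linarith)]
      rw [show (1 - 2 * δ) + 2 * δ = 1 by ring]
      simpa using hstep
    exact (ENNReal.add_le_add_iff_right ENNReal.ofReal_ne_top).mp h2
  exact hμG.trans (measure_mono hGsub)


end
end
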